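/- arXiv:math/0409340 — 6 statements merged into one kernel-verified Lean document; each statement's English description precedes it below -/
import Mathlib

section
/- Let ABC and A'B'C' be nondegenerate triangles in the Euclidean plane with dist(A,C) = dist(A',C'), dist(A,B) = dist(A',B'), and let L > 1 be a real number such that ∠BAC ≤ ∠B'A'C' ≤ L·∠BAC and L·∠B'A'C' − ∠BAC ≤ π·(L−1). Then the affine transformation mapping ABC onto A'B'C' is bi-Lipschitz with constant L, i.e. L⁻¹·dist(x,y) ≤ dist(f(x),f(y)) ≤ L·dist(x,y) for all x, y in the plane. -/
open EuclideanGeometry Real RealInnerProductSpace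

private lemma my_sin_sq_half (x : ℝ) : Real.sin (x/2)^2 = (1 - Real.cos x)/2 := by
  have h := Real.sin_sq (x/2)
  have h2 := Real.cos_sq (x/2)
  have hx : (2:ℝ)*(x/2) = x := by ring
  rw [hx] at h2
  linarith

private lemma my_cos_sq_half (x : ℝ) : Real.cos (x/2)^2 = (1 + Real.cos x)/2 := by
  have h2 := Real.cos_sq (x/2)
  have hx : (2:ℝ)*(x/2) = x := by ring
  rw [hx] at h2
  linarith

private lemma sin_half_le_mul {L s t : ℝ} (hL : 1 < L) (hs0 : 0 ≤ s) (hsπ : s ≤ π)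
    (ht0 : 0 ≤ t) (htπ : t ≤ π) (h : s ≤ L * t) :
    Real.sin (s / 2) ≤ L * Real.sin (t / 2) := by
  have hπ := Real.pi_pos
  have hL0 : (0:ℝ) < L := by linarith
  rcases le_or_gt (L * t) π with hc | hc
  · have h1 : Real.sin (s / 2) ≤ Real.sin (L * t / 2) := by
      apply Real.strictMonoOn_sin.monotoneOn ⟨by linarith, by linarith⟩
        ⟨by linarith [mul_nonneg hL0.le ht0], by linarith⟩ (by linarith)
    have hcon := strictConcaveOn_sin_Icc.concaveOn
    have ha : (0:ℝ) ≤ 1 - 1/L := by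
      rw [sub_nonneg]; exact (div_le_one hL0).2 hL.le
    have hb : (0:ℝ) ≤ 1/L := by positivity
    have hab : (1 - 1/L) + 1/L = 1 := by ring
    have hmem0 : (0:ℝ) ∈ Set.Icc 0 π := ⟨le_rfl, hπ.le⟩
    have hmem1 : L*t/2 ∈ Set.Icc 0 π := ⟨by linarith [mul_nonneg hL0.le ht0], by linarith⟩
    have hkey := hcon.2 hmem0 hmem1 ha hb hab
    have harg : (1 - 1/L) • (0:ℝ) + (1/L) • (L*t/2) = t/2 := by
      simp only [smul_eq_mul, mul_zero, zero_add]; field_simp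
    rw [harg] at hkey
    simp only [smul_eq_mul, Real.sin_zero, mul_zero, zero_add] at hkey
    have : L * ((1/L) * Real.sin (L*t/2)) ≤ L * Real.sin (t/2) :=
      mul_le_mul_of_nonneg_left hkey hL0.le
    rw [show L * ((1/L) * Real.sin (L*t/2)) = Real.sin (L*t/2) by field_simp] at this
    linarith
  · have hs1 : Real.sin (s / 2) ≤ 1 := Real.sin_le_one _
    have hj := Real.mul_le_sin (x := t/2) (by linarith) (by linarith)
    have h3 : L * (2/π * (t/2)) ≤ L * Real.sin (t/2) :=
      mul_le_mul_of_nonneg_left hj hL0.le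
    have h4 : (1:ℝ) < L * (2/π * (t/2)) := by
      rw [show L * (2/π * (t/2)) = (L*t)/π by ring]
      exact (one_lt_div hπ).2 hc
    linarith

set_option maxHeartbeats 2000000 in
/-- Lemma 2 (affin-1) of Belenkiy–Burago: if two nondegenerate planar triangles
`ABC`, `A'B'C'` satisfy `dist A C = dist A' C'`, `dist A B = dist A' B'`,
`∠BAC ≤ ∠B'A'C' ≤ L·∠BAC` and `L·∠B'A'C' − ∠BAC ≤ π·(L−1)` for some `L > 1`,
then the affine transformation mapping `ABC` onto `A'B'C'` is bi-Lipschitz with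
constant `L`. -/
theorem stmt0
    (A B C A' B' C' : EuclideanSpace ℝ (Fin 2))
    (hABC : AffineIndependent ℝ ![A, B, C])
    (hA'B'C' : AffineIndependent ℝ ![A', B', C'])
    (hAC : dist A C = dist A' C')
    (hAB : dist A B = dist A' B')
    (L : ℝ) (hL : 1 < L)
    (hang1 : ∠ B A C ≤ ∠ B' A' C')
    (hang2 : ∠ B' A' C' ≤ L * ∠ B A C)
    (hang3 : L * ∠ B' A' C' - ∠ B A C ≤ π * (L - 1))
    (f : EuclideanSpace ℝ (Fin 2) →ᵃ[ℝ] EuclideanSpace ℝ (Fin 2))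
    (hfA : f A = A') (hfB : f B = B') (hfC : f C = C') :
    ∀ x y : EuclideanSpace ℝ (Fin 2),
      L⁻¹ * dist x y ≤ dist (f x) (f y) ∧ dist (f x) (f y) ≤ L * dist x y := by
  have hπ := Real.pi_pos
  have hL0 : (0:ℝ) < L := lt_trans one_pos hL
  set g := f.linear with hg
  set u : EuclideanSpace ℝ (Fin 2) := B -ᵥ A with hu
  set v : EuclideanSpace ℝ (Fin 2) := C -ᵥ A with hv
  have hgu : g u = B' -ᵥ A' := by rw [hu, hg, f.linearMap_vsub, hfA, hfB]
  have hgv : g v = C' -ᵥ A' := by rw [hv, hg, f.linearMap_vsub, hfA, hfC]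
  have hnu : ‖g u‖ = ‖u‖ := by
    rw [hgu, hu, ← dist_eq_norm_vsub, ← dist_eq_norm_vsub, dist_comm B' A', dist_comm B A, hAB]
  have hnv : ‖g v‖ = ‖v‖ := by
    rw [hgv, hv, ← dist_eq_norm_vsub, ← dist_eq_norm_vsub, dist_comm C' A', dist_comm C A, hAC]
  set α := ∠ B A C with hα
  set α' := ∠ B' A' C' with hα'
  have hαu : α = InnerProductGeometry.angle u v := rfl
  have hα'u : α' = InnerProductGeometry.angle (g u) (g v) := by rw [hgu, hgv]; rfl
  have hα0 : 0 ≤ α := EuclideanGeometry.angle_nonneg _ _ _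
  have hαπ : α ≤ π := EuclideanGeometry.angle_le_pi _ _ _
  have hα'0 : 0 ≤ α' := EuclideanGeometry.angle_nonneg _ _ _
  have hα'π : α' ≤ π := EuclideanGeometry.angle_le_pi _ _ _
  -- inner products
  have hiuv : ⟪u, v⟫ = Real.cos α * (‖u‖ * ‖v‖) :=
    (InnerProductGeometry.cos_angle_mul_norm_mul_norm u v).symm
  have hiuv' : ⟪g u, g v⟫ = Real.cos α' * (‖u‖ * ‖v‖) := by
    rw [hα'u, ← hnu, ← hnv]
    exact (InnerProductGeometry.cos_angle_mul_norm_mul_norm _ _).symm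
  -- four sine inequalities
  have h1 : Real.sin (α'/2) ≤ L * Real.sin (α/2) :=
    sin_half_le_mul hL hα'0 hα'π hα0 hαπ hang2
  have h3 : Real.sin (α/2) ≤ L * Real.sin (α'/2) :=
    sin_half_le_mul hL hα0 hαπ hα'0 hα'π
      (by nlinarith [mul_nonneg (sub_nonneg.2 hL.le) hα'0])
  have h2 : Real.sin ((π - α')/2) ≤ L * Real.sin ((π - α)/2) :=
    sin_half_le_mul hL (by linarith) (by linarith) (by linarith) (by linarith)
      (by nlinarith [mul_nonneg (sub_nonneg.2 hL.le) (sub_nonneg.2 hαπ)])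
  have h4 : Real.sin ((π - α)/2) ≤ L * Real.sin ((π - α')/2) :=
    sin_half_le_mul hL (by linarith) (by linarith) (by linarith) (by linarith)
      (by nlinarith [hang3])
  -- nonnegativity of sines
  have hs : ∀ z : ℝ, 0 ≤ z → z ≤ π → 0 ≤ Real.sin (z/2) := fun z hz hz' =>
    Real.sin_nonneg_of_nonneg_of_le_pi (by linarith) (by linarith)
  have hsα := hs α hα0 hαπ
  have hsα' := hs α' hα'0 hα'π
  have hsβ := hs (π - α) (by linarith) (by linarith)
  have hsβ' := hs (π - α') (by linarith) (by linarith)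
  -- cosine estimates
  have q1 : Real.sin (α'/2)^2 ≤ L^2 * Real.sin (α/2)^2 := by
    have := pow_le_pow_left₀ hsα' h1 2; rwa [mul_pow] at this
  have q3 : Real.sin (α/2)^2 ≤ L^2 * Real.sin (α'/2)^2 := by
    have := pow_le_pow_left₀ hsα h3 2; rwa [mul_pow] at this
  have q2 : Real.sin ((π-α')/2)^2 ≤ L^2 * Real.sin ((π-α)/2)^2 := by
    have := pow_le_pow_left₀ hsβ' h2 2; rwa [mul_pow] at this
  have q4 : Real.sin ((π-α)/2)^2 ≤ L^2 * Real.sin ((π-α')/2)^2 := by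
    have := pow_le_pow_left₀ hsβ h4 2; rwa [mul_pow] at this
  rw [my_sin_sq_half, my_sin_sq_half] at q1 q2 q3 q4
  simp only [Real.cos_pi_sub] at q2 q4
  have e1 : L^2 * Real.cos α - Real.cos α' ≤ L^2 - 1 := by linarith
  have e2 : Real.cos α' - L^2 * Real.cos α ≤ L^2 - 1 := by linarith
  have e3 : L^2 * Real.cos α' - Real.cos α ≤ L^2 - 1 := by linarith
  have e4 : Real.cos α - L^2 * Real.cos α' ≤ L^2 - 1 := by linarith
  -- span of u, v
  have hli := (affineIndependent_iff_linearIndependent_vsub ℝ ![A,B,C] 0).1 hABC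
  have hspan : Submodule.span ℝ ({u, v} : Set (EuclideanSpace ℝ (Fin 2))) = ⊤ := by
    have hcard : Fintype.card {x : Fin 3 // x ≠ 0} = Module.finrank ℝ (EuclideanSpace ℝ (Fin 2)) := by
      rw [finrank_euclideanSpace_fin]
      rw [Fintype.card_subtype]
      decide
    have htop := hli.span_eq_top_of_card_eq_finrank' hcard
    refine top_unique ?_
    rw [← htop]
    refine Submodule.span_le.2 ?_
    rintro w ⟨⟨i, hi⟩, rfl⟩
    fin_cases i
    · exact absurd rfl hi
    · exact Submodule.subset_span (by left; rfl)
    · exact Submodule.subset_span (by right; rfl)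
  -- the main linear estimate
  have main : ∀ w : EuclideanSpace ℝ (Fin 2), ‖g w‖ ≤ L * ‖w‖ ∧ ‖w‖ ≤ L * ‖g w‖ := by
    intro w
    obtain ⟨p, q, hw⟩ := Submodule.mem_span_pair.1 (hspan ▸ Submodule.mem_top (x := w))
    set a := ‖u‖ with ha
    set b := ‖v‖ with hb
    have hn1 : ‖w‖^2 = p^2*a^2 + 2*(p*q)*(Real.cos α*(a*b)) + q^2*b^2 := by
      rw [← hw, norm_add_sq_real, real_inner_smul_left, real_inner_smul_right, hiuv,
        norm_smul, norm_smul, mul_pow, mul_pow, Real.norm_eq_abs, Real.norm_eq_abs,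
        sq_abs, sq_abs]
      ring
    have hgw : g w = p • g u + q • g v := by rw [← hw]; simp
    have hn2 : ‖g w‖^2 = p^2*a^2 + 2*(p*q)*(Real.cos α'*(a*b)) + q^2*b^2 := by
      rw [hgw, norm_add_sq_real, real_inner_smul_left, real_inner_smul_right, hiuv',
        norm_smul, norm_smul, mul_pow, mul_pow, Real.norm_eq_abs, Real.norm_eq_abs,
        sq_abs, sq_abs, hnu, hnv]
      ring
    have t1 : (0:ℝ) ≤ (L^2 - 1 + (L^2 * Real.cos α - Real.cos α')) * (p*a + q*b)^2 :=
      mul_nonneg (by linarith) (sq_nonneg _)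
    have t2 : (0:ℝ) ≤ (L^2 - 1 - (L^2 * Real.cos α - Real.cos α')) * (p*a - q*b)^2 :=
      mul_nonneg (by linarith) (sq_nonneg _)
    have t3 : (0:ℝ) ≤ (L^2 - 1 + (L^2 * Real.cos α' - Real.cos α)) * (p*a + q*b)^2 :=
      mul_nonneg (by linarith) (sq_nonneg _)
    have t4 : (0:ℝ) ≤ (L^2 - 1 - (L^2 * Real.cos α' - Real.cos α)) * (p*a - q*b)^2 :=
      mul_nonneg (by linarith) (sq_nonneg _)
    have s1 : ‖g w‖^2 ≤ (L * ‖w‖)^2 := by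
      rw [mul_pow, hn1, hn2]; linarith [t1, t2]
    have s2 : ‖w‖^2 ≤ (L * ‖g w‖)^2 := by
      rw [mul_pow, hn1, hn2]; linarith [t3, t4]
    constructor
    · have := Real.sqrt_le_sqrt s1
      rwa [Real.sqrt_sq (norm_nonneg _), Real.sqrt_sq (by positivity)] at this
    · have := Real.sqrt_le_sqrt s2
      rwa [Real.sqrt_sq (norm_nonneg _), Real.sqrt_sq (by positivity)] at this
  intro x y
  have hd : dist (f x) (f y) = ‖g (x -ᵥ y)‖ := by
    rw [dist_eq_norm_vsub, hg, f.linearMap_vsub]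
  have hd2 : dist x y = ‖(x -ᵥ y : EuclideanSpace ℝ (Fin 2))‖ := dist_eq_norm_vsub _ _ _
  obtain ⟨m1, m2⟩ := main (x -ᵥ y)
  constructor
  · rw [hd, hd2, inv_mul_le_iff₀ hL0]; exact m2
  · rw [hd, hd2]; exact m1
end

section
/- Let L ≥ 1 and ε ∈ (0, π/2]. Let ABC and A'B'C' be nondegenerate triangles in the Euclidean plane such that L⁻¹ ≤ dist(A,B)/dist(A',B') ≤ L, L⁻¹ ≤ dist(A,C)/dist(A',C') ≤ L, ε ≤ ∠BAC ≤ π − ε, and ε ≤ ∠B'A'C' ≤ π − ε. Then the affine transformation mapping ABC onto A'B'C' is bi-Lipschitz with constant (L·π/(2ε))². -/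
open EuclideanGeometry Real

set_option maxHeartbeats 1000000 in
lemma key_trig {y : ℝ} (h0 : 0 ≤ y) (h2 : y ≤ π / 2) :
    4 * y ^ 2 * Real.sin y ≤ π ^ 2 * (1 - Real.cos y) := by
  rcases le_or_gt y (π ^ 2 / 8) with hy | hy
  · set t := y / 2 with ht
    have ht0 : 0 ≤ t := by positivity
    have htlt : t < π / 2 := by rw [ht]; nlinarith [pi_pos]
    have hcost : 0 ≤ Real.cos t :=
      Real.cos_nonneg_of_mem_Icc ⟨by linarith [pi_pos], htlt.le⟩
    have hsc : t * Real.cos t ≤ Real.sin t := by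
      rcases eq_or_lt_of_le ht0 with h | h
      · simp [← h]
      · have hcos : 0 < Real.cos t := Real.cos_pos_of_mem_Ioo ⟨by linarith [pi_pos], htlt⟩
        have htan := Real.lt_tan h htlt
        rw [Real.tan_eq_sin_div_cos] at htan
        calc t * Real.cos t ≤ (Real.sin t / Real.cos t) * Real.cos t :=
              mul_le_mul_of_nonneg_right htan.le hcos.le
          _ = Real.sin t := by field_simp
    have hy2 : y = 2 * t := by rw [ht]; ring
    have hsin2 : Real.sin y = 2 * Real.sin t * Real.cos t := by rw [hy2, Real.sin_two_mul]
    have hcos2 : Real.cos y = 1 - 2 * Real.sin t ^ 2 := by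
      have := Real.sin_sq_add_cos_sq t
      rw [hy2, Real.cos_two_mul]; nlinarith [this]
    have hsint : 0 ≤ Real.sin t := Real.sin_nonneg_of_nonneg_of_le_pi ht0 (by linarith [pi_pos])
    have ht16 : 16 * t ≤ π ^ 2 := by rw [ht]; linarith
    have e1 : 0 ≤ 2 * π ^ 2 * (Real.sin t * (Real.sin t - t * Real.cos t)) :=
      mul_nonneg (by positivity) (mul_nonneg hsint (by linarith))
    have e2 : 0 ≤ (2 * π ^ 2 * t - 32 * t ^ 2) * (Real.sin t * Real.cos t) :=
      mul_nonneg (by nlinarith) (mul_nonneg hsint hcost)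
    rw [hsin2, hcos2, hy2]
    nlinarith [e1, e2]
  · have hmem : (π / 2) ∈ Set.Icc (π ^ 2 / 8) (π / 2) :=
      Set.right_mem_Icc.mpr (by nlinarith [pi_pos, pi_lt_d2])
    have hanti : AntitoneOn (fun z => π ^ 2 * (1 - Real.cos z) - 4 * z ^ 2 * Real.sin z)
        (Set.Icc (π ^ 2 / 8) (π / 2)) := by
      apply antitoneOn_of_deriv_nonpos (convex_Icc _ _)
      · fun_prop
      · intro z hz
        apply DifferentiableAt.differentiableWithinAt
        fun_prop
      · intro z hz
        rw [interior_Icc] at hz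
        have hder : HasDerivAt (fun z => π ^ 2 * (1 - Real.cos z) - 4 * z ^ 2 * Real.sin z)
            (π ^ 2 * Real.sin z - (4 * (2 * z) * Real.sin z + 4 * z ^ 2 * Real.cos z)) z := by
          have h1 : HasDerivAt (fun z : ℝ => π ^ 2 * (1 - Real.cos z)) (π ^ 2 * Real.sin z) z := by
            simpa using (((Real.hasDerivAt_cos z).const_sub 1).const_mul (π ^ 2))
          have h2 : HasDerivAt (fun z : ℝ => 4 * z ^ 2 * Real.sin z)
              (4 * (2 * z) * Real.sin z + 4 * z ^ 2 * Real.cos z) z := by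
            have := (((hasDerivAt_pow 2 z).const_mul 4).mul (Real.hasDerivAt_sin z))
            exact this.congr_deriv (by norm_num)
          exact h1.sub h2
        rw [hder.deriv]
        have hs : 0 ≤ Real.sin z :=
          Real.sin_nonneg_of_nonneg_of_le_pi (by nlinarith [pi_pos, hz.1]) (by linarith [hz.2, pi_pos])
        have hc : 0 ≤ Real.cos z := Real.cos_nonneg_of_mem_Icc ⟨by nlinarith [pi_pos, hz.1], hz.2.le⟩
        nlinarith [hz.1, pi_pos, sq_nonneg z, mul_nonneg hs hc]
    have hle := hanti ⟨hy.le, h2⟩ hmem h2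
    simp only [Real.cos_pi_div_two, Real.sin_pi_div_two] at hle
    nlinarith [hle]

lemma key_const {L ε : ℝ} (hL : 1 ≤ L) (hε0 : 0 < ε) (hε : ε ≤ π / 2) :
    L ^ 2 * (1 + Real.cos ε) ≤ ((L * π / (2 * ε)) ^ 2) ^ 2 * (1 - Real.cos ε) := by
  have hc1 : Real.cos ε < 1 := by
    have := Real.cos_lt_cos_of_nonneg_of_le_pi le_rfl (by linarith [pi_pos]) hε0
    simpa using this
  have hkey := key_trig hε0.le hε
  have hsin : Real.sin ε ^ 2 = (1 - Real.cos ε) * (1 + Real.cos ε) := by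
    nlinarith [Real.sin_sq_add_cos_sq ε]
  have hsin0 : 0 ≤ Real.sin ε := Real.sin_nonneg_of_nonneg_of_le_pi hε0.le (by linarith [pi_pos])
  have hsq : (4 * ε ^ 2 * Real.sin ε) ^ 2 ≤ (π ^ 2 * (1 - Real.cos ε)) ^ 2 := by
    apply sq_le_sq' _ hkey
    nlinarith [mul_nonneg (mul_nonneg (by positivity : (0:ℝ) ≤ 4 * ε ^ 2) hsin0) hε0.le]
  have h1c : 0 < 1 - Real.cos ε := by linarith
  have h16 : 16 * ε ^ 4 * (1 + Real.cos ε) ≤ π ^ 4 * (1 - Real.cos ε) := by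
    have hs2 : (4 * ε ^ 2 * Real.sin ε) ^ 2
        = 16 * ε ^ 4 * ((1 - Real.cos ε) * (1 + Real.cos ε)) := by
      rw [mul_pow, mul_pow, hsin]; ring
    have expand : (16 * ε ^ 4 * (1 + Real.cos ε)) * (1 - Real.cos ε)
        ≤ (π ^ 4 * (1 - Real.cos ε)) * (1 - Real.cos ε) := by nlinarith [hsq, hs2]
    exact le_of_mul_le_mul_right expand h1c
  have hK : ((L * π / (2 * ε)) ^ 2) ^ 2 = L ^ 4 * π ^ 4 / (16 * ε ^ 4) := by
    field_simp; ring
  rw [hK, div_mul_eq_mul_div, le_div_iff₀ (by positivity : (0:ℝ) < 16 * ε ^ 4)]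
  have hcpos : (0:ℝ) ≤ 1 + Real.cos ε := by nlinarith [Real.neg_one_le_cos ε]
  have hL1 : (1:ℝ) ≤ L ^ 2 := by nlinarith
  have hL2 : L ^ 2 ≤ L ^ 4 := by nlinarith [sq_nonneg L]
  calc L ^ 2 * (1 + Real.cos ε) * (16 * ε ^ 4) ≤ L ^ 4 * (16 * ε ^ 4 * (1 + Real.cos ε)) := by
        nlinarith [mul_nonneg hcpos (by positivity : (0:ℝ) ≤ 16 * ε ^ 4)]
    _ ≤ L ^ 4 * (π ^ 4 * (1 - Real.cos ε)) := by
        exact mul_le_mul_of_nonneg_left h16 (by positivity)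
    _ = L ^ 4 * π ^ 4 * (1 - Real.cos ε) := by ring

lemma core_real {L ε a b a' b' X X' s t : ℝ} (hL : 1 ≤ L) (hε0 : 0 < ε) (hε : ε ≤ π / 2)
    (ha : 0 ≤ a) (hb : 0 ≤ b) (ha' : 0 ≤ a') (hb' : 0 ≤ b')
    (hua : a' ≤ L * a) (hvb : b' ≤ L * b)
    (hX : |X| ≤ Real.cos ε * (a * b)) (hX' : |X'| ≤ Real.cos ε * (a' * b')) :
    s ^ 2 * a' ^ 2 + 2 * (s * t) * X' + t ^ 2 * b' ^ 2
      ≤ ((L * π / (2 * ε)) ^ 2) ^ 2 *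
        (s ^ 2 * a ^ 2 + 2 * (s * t) * X + t ^ 2 * b ^ 2) := by
  have hL0 : (0:ℝ) < L := by linarith
  have hc0 : 0 ≤ Real.cos ε := Real.cos_nonneg_of_mem_Icc ⟨by linarith, hε⟩
  set c : ℝ := Real.cos ε with hcdef
  have hc1 : c ≤ 1 := Real.cos_le_one ε
  have cross : ∀ (Y p q : ℝ), 0 ≤ p → 0 ≤ q → |Y| ≤ c * (p * q) →
      |2 * (s * t) * Y| ≤ c * (s ^ 2 * p ^ 2 + t ^ 2 * q ^ 2) := by
    intro Y p q hp hq hY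
    have h1 : |2 * (s * t) * Y| = 2 * (|s| * |t|) * |Y| := by
      rw [abs_mul, abs_mul, abs_mul, abs_two]
    rw [h1]
    have h2 : 2 * (|s| * |t|) * |Y| ≤ 2 * (|s| * |t|) * (c * (p * q)) :=
      mul_le_mul_of_nonneg_left hY (by positivity)
    have e : c * (s ^ 2 * p ^ 2 + t ^ 2 * q ^ 2) - 2 * (|s| * |t|) * (c * (p * q))
        = c * ((|s| * p - |t| * q) ^ 2) := by
      rw [← sq_abs s, ← sq_abs t]; ring
    have e2 : 0 ≤ c * ((|s| * p - |t| * q) ^ 2) :=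
      mul_nonneg hc0 (sq_nonneg _)
    linarith
  have crossN := cross _ _ _ ha' hb' hX'
  have crossD := cross _ _ _ ha hb hX
  have ha2 : a' ^ 2 ≤ L ^ 2 * a ^ 2 := by nlinarith
  have hb2 : b' ^ 2 ≤ L ^ 2 * b ^ 2 := by nlinarith
  have hQ0 : (0:ℝ) ≤ s ^ 2 * a ^ 2 + t ^ 2 * b ^ 2 := by positivity
  have hI : s ^ 2 * a' ^ 2 + 2 * (s * t) * X' + t ^ 2 * b' ^ 2
      ≤ (1 + c) * L ^ 2 * (s ^ 2 * a ^ 2 + t ^ 2 * b ^ 2) := by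
    have h4 : 2 * (s * t) * X' ≤ c * (s ^ 2 * a' ^ 2 + t ^ 2 * b' ^ 2) :=
      le_trans (le_abs_self _) crossN
    have h5 := mul_le_mul_of_nonneg_left ha2 (sq_nonneg s)
    have h6 := mul_le_mul_of_nonneg_left hb2 (sq_nonneg t)
    have h7 : c * (s ^ 2 * a' ^ 2 + t ^ 2 * b' ^ 2)
        ≤ c * (L ^ 2 * (s ^ 2 * a ^ 2 + t ^ 2 * b ^ 2)) := by
      apply mul_le_mul_of_nonneg_left _ hc0
      nlinarith
    linarith
  have hII : (1 - c) * (s ^ 2 * a ^ 2 + t ^ 2 * b ^ 2)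
      ≤ s ^ 2 * a ^ 2 + 2 * (s * t) * X + t ^ 2 * b ^ 2 := by
    have h4 : -(c * (s ^ 2 * a ^ 2 + t ^ 2 * b ^ 2)) ≤ 2 * (s * t) * X := by
      have := neg_abs_le (2 * (s * t) * X)
      linarith
    linarith
  have hkc : L ^ 2 * (1 + c) ≤ ((L * π / (2 * ε)) ^ 2) ^ 2 * (1 - c) := key_const hL hε0 hε
  have hK0 : (0:ℝ) ≤ ((L * π / (2 * ε)) ^ 2) ^ 2 := by positivity
  generalize hK : ((L * π / (2 * ε)) ^ 2) ^ 2 = K2 at hkc hK0 ⊢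
  calc s ^ 2 * a' ^ 2 + 2 * (s * t) * X' + t ^ 2 * b' ^ 2
      ≤ (1 + c) * L ^ 2 * (s ^ 2 * a ^ 2 + t ^ 2 * b ^ 2) := hI
    _ ≤ K2 * (1 - c) * (s ^ 2 * a ^ 2 + t ^ 2 * b ^ 2) := by
        have := mul_le_mul_of_nonneg_right hkc hQ0
        linarith
    _ ≤ K2 * (s ^ 2 * a ^ 2 + 2 * (s * t) * X + t ^ 2 * b ^ 2) := by
        have := mul_le_mul_of_nonneg_left hII hK0
        linarith

lemma core {V : Type*} [NormedAddCommGroup V] [InnerProductSpace ℝ V]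
    {L ε : ℝ} (hL : 1 ≤ L) (hε0 : 0 < ε) (hε : ε ≤ π / 2)
    {u v u' v' : V}
    (hu' : ‖u'‖ ≤ L * ‖u‖) (hv' : ‖v'‖ ≤ L * ‖v‖)
    (hin : |(inner ℝ u v : ℝ)| ≤ Real.cos ε * (‖u‖ * ‖v‖))
    (hin' : |(inner ℝ u' v' : ℝ)| ≤ Real.cos ε * (‖u'‖ * ‖v'‖))
    (s t : ℝ) :
    ‖s • u' + t • v'‖ ≤ (L * π / (2 * ε)) ^ 2 * ‖s • u + t • v‖ := by
  have hL0 : (0:ℝ) < L := by linarith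
  have expand : ∀ (x y : V), ‖s • x + t • y‖ ^ 2
      = s ^ 2 * ‖x‖ ^ 2 + 2 * (s * t) * (inner ℝ x y : ℝ) + t ^ 2 * ‖y‖ ^ 2 := by
    intro x y
    rw [norm_add_sq_real, real_inner_smul_left, real_inner_smul_right,
      norm_smul, norm_smul, mul_pow, mul_pow, Real.norm_eq_abs, Real.norm_eq_abs,
      sq_abs, sq_abs]
    ring
  have h1 := core_real (s := s) (t := t) hL hε0 hε (norm_nonneg u) (norm_nonneg v)
    (norm_nonneg u') (norm_nonneg v') hu' hv' hin hin'
  rw [← expand u' v', ← expand u v] at h1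
  have hsq : ‖s • u' + t • v'‖ ^ 2 ≤ ((L * π / (2 * ε)) ^ 2 * ‖s • u + t • v‖) ^ 2 := by
    rw [mul_pow]; exact h1
  exact le_of_pow_le_pow_left₀ two_ne_zero (by positivity) hsq

lemma inner_of_angle {V : Type*} [NormedAddCommGroup V] [InnerProductSpace ℝ V]
    {x y : V} {ε : ℝ} (hε0 : 0 < ε)
    (h1 : ε ≤ InnerProductGeometry.angle x y)
    (h2 : InnerProductGeometry.angle x y ≤ π - ε) :
    |(inner ℝ x y : ℝ)| ≤ Real.cos ε * (‖x‖ * ‖y‖) := by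
  have hub : Real.cos (InnerProductGeometry.angle x y) ≤ Real.cos ε :=
    Real.cos_le_cos_of_nonneg_of_le_pi hε0.le
      (InnerProductGeometry.angle_le_pi x y) h1
  have hlb : -Real.cos ε ≤ Real.cos (InnerProductGeometry.angle x y) := by
    have h3 := Real.cos_le_cos_of_nonneg_of_le_pi
      (InnerProductGeometry.angle_nonneg x y) (by linarith [hε0] : π - ε ≤ π) h2
    rwa [Real.cos_pi_sub] at h3
  rw [← InnerProductGeometry.cos_angle_mul_norm_mul_norm x y, abs_mul,
    abs_of_nonneg (by positivity : (0:ℝ) ≤ ‖x‖ * ‖y‖)]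
  exact mul_le_mul_of_nonneg_right (abs_le.mpr ⟨hlb, hub⟩) (by positivity)

/-- Corollary (affin-2) of Belenkiy–Burago: if two nondegenerate planar triangles
`ABC`, `A'B'C'` have side-length ratios at `A` between `L⁻¹` and `L` and angles at
`A` between `ε` and `π − ε`, then the affine transformation mapping `ABC` onto
`A'B'C'` is bi-Lipschitz with constant `(L·π/(2ε))²`. -/
theorem stmt1
    (L ε : ℝ) (hL : 1 ≤ L) (hε0 : 0 < ε) (hε : ε ≤ π / 2)
    (A B C A' B' C' : EuclideanSpace ℝ (Fin 2))
    (hABC : AffineIndependent ℝ ![A, B, C])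
    (hA'B'C' : AffineIndependent ℝ ![A', B', C'])
    (hc1 : L⁻¹ ≤ dist A B / dist A' B') (hc2 : dist A B / dist A' B' ≤ L)
    (hb1 : L⁻¹ ≤ dist A C / dist A' C') (hb2 : dist A C / dist A' C' ≤ L)
    (hang1 : ε ≤ ∠ B A C) (hang2 : ∠ B A C ≤ π - ε)
    (hang1' : ε ≤ ∠ B' A' C') (hang2' : ∠ B' A' C' ≤ π - ε)
    (f : EuclideanSpace ℝ (Fin 2) →ᵃ[ℝ] EuclideanSpace ℝ (Fin 2))
    (hfA : f A = A') (hfB : f B = B') (hfC : f C = C') :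
    ∀ x y : EuclideanSpace ℝ (Fin 2),
      ((L * π / (2 * ε)) ^ 2)⁻¹ * dist x y ≤ dist (f x) (f y) ∧
        dist (f x) (f y) ≤ (L * π / (2 * ε)) ^ 2 * dist x y := by
  have hL0 : (0:ℝ) < L := by linarith
  set u : EuclideanSpace ℝ (Fin 2) := B - A with hu_def
  set v : EuclideanSpace ℝ (Fin 2) := C - A with hv_def
  set u' : EuclideanSpace ℝ (Fin 2) := B' - A' with hu'_def
  set v' : EuclideanSpace ℝ (Fin 2) := C' - A' with hv'_def
  -- distances as norms
  have hdAB : dist A B = ‖u‖ := by rw [dist_eq_norm, hu_def, norm_sub_rev]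
  have hdAC : dist A C = ‖v‖ := by rw [dist_eq_norm, hv_def, norm_sub_rev]
  have hdAB' : dist A' B' = ‖u'‖ := by rw [dist_eq_norm, hu'_def, norm_sub_rev]
  have hdAC' : dist A' C' = ‖v'‖ := by rw [dist_eq_norm, hv'_def, norm_sub_rev]
  -- positivity of primed distances
  have hne : A' ≠ B' := by
    intro h
    have h01 : (![A', B', C'] : Fin 3 → EuclideanSpace ℝ (Fin 2)) 0 = ![A', B', C'] 1 := by
      simp [h]
    exact (by decide : (0 : Fin 3) ≠ 1) (hA'B'C'.injective h01)
  have hne2 : A' ≠ C' := by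
    intro h
    have h02 : (![A', B', C'] : Fin 3 → EuclideanSpace ℝ (Fin 2)) 0 = ![A', B', C'] 2 := by
      simp [h]
    exact (by decide : (0 : Fin 3) ≠ 2) (hA'B'C'.injective h02)
  have hu'pos : 0 < ‖u'‖ := by rw [← hdAB']; exact dist_pos.mpr hne
  have hv'pos : 0 < ‖v'‖ := by rw [← hdAC']; exact dist_pos.mpr hne2
  -- side estimates
  rw [hdAB, hdAB'] at hc1 hc2
  rw [hdAC, hdAC'] at hb1 hb2
  have hLL : L * L⁻¹ = 1 := mul_inv_cancel₀ (ne_of_gt hL0)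
  have hBu : ‖u‖ ≤ L * ‖u'‖ := by
    rw [div_le_iff₀ hu'pos] at hc2; linarith
  have hBu' : ‖u'‖ ≤ L * ‖u‖ := by
    rw [le_div_iff₀ hu'pos] at hc1; nlinarith
  have hBv : ‖v‖ ≤ L * ‖v'‖ := by
    rw [div_le_iff₀ hv'pos] at hb2; linarith
  have hBv' : ‖v'‖ ≤ L * ‖v‖ := by
    rw [le_div_iff₀ hv'pos] at hb1; nlinarith
  -- inner product bounds from angles
  have hang : ∠ B A C = InnerProductGeometry.angle u v := by
    rw [EuclideanGeometry.angle, hu_def, hv_def]; congr 1 <;> exact (vsub_eq_sub _ _)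
  have hang' : ∠ B' A' C' = InnerProductGeometry.angle u' v' := by
    rw [EuclideanGeometry.angle, hu'_def, hv'_def]; congr 1 <;> exact (vsub_eq_sub _ _)
  rw [hang] at hang1 hang2
  rw [hang'] at hang1' hang2'
  have hin : |(inner ℝ u v : ℝ)| ≤ Real.cos ε * (‖u‖ * ‖v‖) := inner_of_angle hε0 hang1 hang2
  have hin' : |(inner ℝ u' v' : ℝ)| ≤ Real.cos ε * (‖u'‖ * ‖v'‖) :=
    inner_of_angle hε0 hang1' hang2'
  -- linear independence and basis
  have hli : LinearIndependent ℝ ![u, v] := by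
    rw [LinearIndependent.pair_iff]
    intro s t hst
    have hsum : ∑ i, (![-s - t, s, t] : Fin 3 → ℝ) i = 0 := by
      simp [Fin.sum_univ_three]; ring
    have hcomb : ∑ i, (![-s - t, s, t] : Fin 3 → ℝ) i • (![A, B, C] i) = 0 := by
      simp only [Fin.sum_univ_three, Matrix.cons_val_zero, Matrix.cons_val_one,
        Matrix.head_cons, Matrix.cons_val_two, Matrix.tail_cons]
      have : (-s - t) • A + s • B + t • C = s • (B - A) + t • (C - A) := by module
      rw [this, ← hu_def, ← hv_def, hst]
    have hz := affineIndependent_iff.mp hABC Finset.univ ![-s - t, s, t]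
      (by simpa using hsum) (by simpa using hcomb)
    exact ⟨by simpa using hz 1 (Finset.mem_univ _), by simpa using hz 2 (Finset.mem_univ _)⟩
  have hcard : Fintype.card (Fin 2) = Module.finrank ℝ (EuclideanSpace ℝ (Fin 2)) := by
    simp [finrank_euclideanSpace_fin]
  let bas : Module.Basis (Fin 2) ℝ (EuclideanSpace ℝ (Fin 2)) :=
    basisOfLinearIndependentOfCardEqFinrank hli hcard
  have hbas0 : bas 0 = u := by
    simp [bas, coe_basisOfLinearIndependentOfCardEqFinrank]
  have hbas1 : bas 1 = v := by
    simp [bas, coe_basisOfLinearIndependentOfCardEqFinrank]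
  -- image of basis vectors
  have hTu : f.linear u = u' := by
    rw [hu_def, ← vsub_eq_sub, f.linearMap_vsub, hfB, hfA, vsub_eq_sub]
  have hTv : f.linear v = v' := by
    rw [hv_def, ← vsub_eq_sub, f.linearMap_vsub, hfC, hfA, vsub_eq_sub]
  -- main
  intro x y
  set w : EuclideanSpace ℝ (Fin 2) := x - y with hw_def
  set s : ℝ := bas.repr w 0 with hs_def
  set t : ℝ := bas.repr w 1 with ht_def
  have hw : w = s • u + t • v := by
    conv_lhs => rw [← bas.sum_repr w]
    rw [Fin.sum_univ_two, hbas0, hbas1]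
  have hfw : f x - f y = s • u' + t • v' := by
    have : f x - f y = f.linear w := by
      rw [hw_def, ← vsub_eq_sub, ← vsub_eq_sub, f.linearMap_vsub]
    rw [this, hw, map_add, map_smul, map_smul, hTu, hTv]
  have hdist : dist (f x) (f y) = ‖s • u' + t • v'‖ := by
    rw [dist_eq_norm, hfw]
  have hdist2 : dist x y = ‖s • u + t • v‖ := by rw [dist_eq_norm, ← hw_def, hw]
  have hKpos : (0:ℝ) < (L * π / (2 * ε)) ^ 2 := by
    have : 0 < L * π / (2 * ε) := by positivity
    positivity
  constructor
  · rw [inv_mul_le_iff₀ hKpos, hdist, hdist2]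
    exact core hL hε0 hε hBu hBv hin' hin s t
  · rw [hdist, hdist2]
    exact core hL hε0 hε hBu' hBv' hin hin' s t
end

section
/- Let ABC and A'B'C' be nondegenerate triangles in the Euclidean plane with dist(A,C) = dist(A',C') and dist(A,B) = dist(A',B'). Let D be a point strictly between B and C, let f be the affine transformation mapping ABC onto A'B'C', and let D' = f(D). Set α = ∠BAD, β = ∠CAD, α₁ = ∠B'A'D', β₁ = ∠C'A'D'. Assume α < π/2, β < π/2, 0 < ∠B'A'C' − α < π/2, and 0 < ∠B'A'C' − β < π/2. Then |α − α₁| ≤ |∠BAC − ∠B'A'C'| and |β − β₁| ≤ |∠BAC − ∠B'A'C'|. -/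
open EuclideanGeometry Real InnerProductGeometry RealInnerProductSpace

/-- Vector-level facts about a point on a segment: products of sines of subangles with
norms, and the splitting of the angle. -/
private lemma tri_aux {V : Type*} [NormedAddCommGroup V] [InnerProductSpace ℝ V]
    (u w : V) {t : ℝ} (ht0 : 0 < t) (ht1 : t < 1) :
    Real.sin (InnerProductGeometry.angle u ((1-t) • u + t • w)) * (‖u‖ * ‖(1-t) • u + t • w‖) =
      t * Real.sqrt (‖u‖^2 * ‖w‖^2 - (inner ℝ u w : ℝ)^2) ∧
    Real.sin (InnerProductGeometry.angle ((1-t) • u + t • w) w) * (‖(1-t) • u + t • w‖ * ‖w‖) =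
      (1-t) * Real.sqrt (‖u‖^2 * ‖w‖^2 - (inner ℝ u w : ℝ)^2) ∧
    (u ≠ 0 → w ≠ 0 → (1-t) • u + t • w ≠ 0 →
      0 < InnerProductGeometry.angle u w → InnerProductGeometry.angle u w < π →
      InnerProductGeometry.angle u ((1-t) • u + t • w)
        + InnerProductGeometry.angle ((1-t) • u + t • w) w = InnerProductGeometry.angle u w) := by
  set d : V := (1-t) • u + t • w with hd
  set X : ℝ := ‖u‖^2 * ‖w‖^2 - (inner ℝ u w : ℝ)^2 with hX
  set S : ℝ := Real.sqrt X with hS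
  have hud : (inner ℝ u d : ℝ) = (1-t) * ‖u‖^2 + t * (inner ℝ u w : ℝ) := by
    simp only [hd, inner_add_right, real_inner_smul_right, real_inner_self_eq_norm_sq]
  have hdw : (inner ℝ d w : ℝ) = (1-t) * (inner ℝ u w : ℝ) + t * ‖w‖^2 := by
    simp only [hd, inner_add_left, real_inner_smul_left, real_inner_self_eq_norm_sq]
  have hdd : (inner ℝ d d : ℝ) = (1-t)^2 * ‖u‖^2 + 2*(t*(1-t)) * (inner ℝ u w : ℝ) + t^2 * ‖w‖^2 := by
    simp only [hd, inner_add_left, inner_add_right, real_inner_smul_left, real_inner_smul_right,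
      real_inner_comm w u]
    simp only [real_inner_self_eq_norm_sq]
    ring
  have hXnn : 0 ≤ X := by
    have h1 := abs_real_inner_le_norm u w
    have h2 := abs_nonneg (inner ℝ u w : ℝ)
    have h3 := sq_abs (inner ℝ u w : ℝ)
    nlinarith
  have hsq : S^2 = X := Real.sq_sqrt hXnn
  have hSnn : 0 ≤ S := Real.sqrt_nonneg X
  have hαs : Real.sin (InnerProductGeometry.angle u d) * (‖u‖ * ‖d‖) = t * S := by
    have h1 := InnerProductGeometry.sin_angle_mul_norm_mul_norm u d
    have h2 : (inner ℝ u u : ℝ) * (inner ℝ d d : ℝ) - (inner ℝ u d : ℝ) * (inner ℝ u d : ℝ) = t^2 * X := by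
      rw [hud, hdd, real_inner_self_eq_norm_sq, hX]; ring
    rw [h2, Real.sqrt_mul (sq_nonneg t), Real.sqrt_sq ht0.le] at h1
    exact h1
  have hβs : Real.sin (InnerProductGeometry.angle d w) * (‖d‖ * ‖w‖) = (1-t) * S := by
    have h1 := InnerProductGeometry.sin_angle_mul_norm_mul_norm d w
    have h2 : (inner ℝ d d : ℝ) * (inner ℝ w w : ℝ) - (inner ℝ d w : ℝ) * (inner ℝ d w : ℝ) = (1-t)^2 * X := by
      rw [hdd, hdw, real_inner_self_eq_norm_sq, hX]; ring
    rw [h2, Real.sqrt_mul (sq_nonneg (1-t)), Real.sqrt_sq (by linarith)] at h1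
    exact h1
  refine ⟨hαs, hβs, fun hu0 hw0 hd0 hγ0 hγπ => ?_⟩
  have ha : (0:ℝ) < ‖u‖ := norm_pos_iff.2 hu0
  have hc : (0:ℝ) < ‖w‖ := norm_pos_iff.2 hw0
  have hm : (0:ℝ) < ‖d‖ := norm_pos_iff.2 hd0
  have hαc : Real.cos (InnerProductGeometry.angle u d) * (‖u‖ * ‖d‖)
      = (1-t) * ‖u‖^2 + t * (inner ℝ u w : ℝ) := by
    rw [InnerProductGeometry.cos_angle_mul_norm_mul_norm, hud]
  have hβc : Real.cos (InnerProductGeometry.angle d w) * (‖d‖ * ‖w‖)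
      = (1-t) * (inner ℝ u w : ℝ) + t * ‖w‖^2 := by
    rw [InnerProductGeometry.cos_angle_mul_norm_mul_norm, hdw]
  have hγc : Real.cos (InnerProductGeometry.angle u w) * (‖u‖ * ‖w‖) = (inner ℝ u w : ℝ) :=
    InnerProductGeometry.cos_angle_mul_norm_mul_norm u w
  have hγs : Real.sin (InnerProductGeometry.angle u w) * (‖u‖ * ‖w‖) = S := by
    have h1 := InnerProductGeometry.sin_angle_mul_norm_mul_norm u w
    have h2 : (inner ℝ u u : ℝ) * (inner ℝ w w : ℝ) - (inner ℝ u w : ℝ) * (inner ℝ u w : ℝ) = X := by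
      rw [real_inner_self_eq_norm_sq, real_inner_self_eq_norm_sq, hX]; ring
    rw [h2] at h1
    exact h1
  have hm2 : ‖d‖^2 = (1-t)^2 * ‖u‖^2 + 2*(t*(1-t)) * (inner ℝ u w : ℝ) + t^2 * ‖w‖^2 := by
    rw [← real_inner_self_eq_norm_sq, hdd]
  set α := InnerProductGeometry.angle u d
  set β := InnerProductGeometry.angle d w
  set γ := InnerProductGeometry.angle u w
  set p : ℝ := (inner ℝ u w : ℝ) with hp
  have hpos : (0:ℝ) < ‖u‖ * ‖d‖ * (‖d‖ * ‖w‖) := by positivity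
  have ecos : Real.cos (α + β) * (‖u‖ * ‖d‖ * (‖d‖ * ‖w‖))
      = Real.cos γ * (‖u‖ * ‖d‖ * (‖d‖ * ‖w‖)) := by
    rw [Real.cos_add]
    linear_combination (Real.cos β * (‖d‖ * ‖w‖)) * hαc
      + ((1-t) * ‖u‖^2 + t * p) * hβc
      - (Real.sin β * (‖d‖ * ‖w‖)) * hαs - (t * S) * hβs
      - (t*(1-t)) * hsq + (t*(1-t)) * hX - p * hm2 - (‖d‖^2) * hγc
  have esin : Real.sin (α + β) * (‖u‖ * ‖d‖ * (‖d‖ * ‖w‖))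
      = Real.sin γ * (‖u‖ * ‖d‖ * (‖d‖ * ‖w‖)) := by
    rw [Real.sin_add]
    linear_combination (Real.cos β * (‖d‖ * ‖w‖)) * hαs + (t * S) * hβc
      + (Real.sin β * (‖d‖ * ‖w‖)) * hαc + ((1-t) * ‖u‖^2 + t * p) * hβs
      - S * hm2 - (‖d‖^2) * hγs
  have hcc : Real.cos (α + β) = Real.cos γ := mul_right_cancel₀ hpos.ne' ecos
  have hss : Real.sin (α + β) = Real.sin γ := mul_right_cancel₀ hpos.ne' esin
  have hsγ : 0 < Real.sin γ := Real.sin_pos_of_pos_of_lt_pi hγ0 hγπ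
  have hαnn := InnerProductGeometry.angle_nonneg u d
  have hβnn := InnerProductGeometry.angle_nonneg d w
  have hsumπ : α + β ≤ π := by
    by_contra h
    push_neg at h
    have h2π : α + β ≤ 2 * π := by
      have := InnerProductGeometry.angle_le_pi u d
      have := InnerProductGeometry.angle_le_pi d w
      linarith
    have hx : Real.sin (α + β - π) = - Real.sin (α + β) := by
      rw [Real.sin_sub]; simp
    have hnn := Real.sin_nonneg_of_nonneg_of_le_pi (x := α + β - π) (by linarith) (by linarith)
    rw [hx] at hnn
    linarith [hss ▸ hsγ]
  exact Real.injOn_cos ⟨by linarith, hsumπ⟩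
    ⟨InnerProductGeometry.angle_nonneg u w, InnerProductGeometry.angle_le_pi u w⟩ hcc

/-- The purely trigonometric core. -/
private lemma trig_key {α β α₁ β₁ γ γ' : ℝ}
    (hsum : α + β = γ) (hsum' : α₁ + β₁ = γ')
    (hstar : Real.sin α * Real.sin β₁ = Real.sin α₁ * Real.sin β)
    (hα0 : 0 ≤ α) (hβ0 : 0 ≤ β) (hα₁0 : 0 ≤ α₁) (hβ₁0 : 0 ≤ β₁)
    (hγ'π : γ' < π) (hαh : α < π/2) (hβh : β < π/2)
    (h1 : 0 < γ' - α) (h2 : γ' - α < π/2) (h3 : 0 < γ' - β) (h4 : γ' - β < π/2) :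
    |α - α₁| ≤ |γ - γ'| ∧ |β - β₁| ≤ |γ - γ'| := by
  have hγ'0 : 0 < γ' := by linarith
  have hsγ' : 0 < Real.sin γ' := Real.sin_pos_of_pos_of_lt_pi hγ'0 hγ'π
  have hα₁π : α₁ < π := by linarith
  have hβ₁π : β₁ < π := by linarith
  have hid1 : Real.sin γ' * Real.sin (α - α₁)
      = Real.sin α₁ * (Real.sin β - Real.sin (γ' - α)) := by
    have e : Real.sin α * Real.sin (γ' - α₁) - Real.sin α₁ * Real.sin (γ' - α)
        = Real.sin γ' * Real.sin (α - α₁) := by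
      simp only [Real.sin_sub]; ring
    have hb : γ' - α₁ = β₁ := by linarith
    rw [hb, hstar] at e
    linarith
  have hid2 : Real.sin γ' * Real.sin (β - β₁)
      = Real.sin β₁ * (Real.sin α - Real.sin (γ' - β)) := by
    have e : Real.sin β * Real.sin (γ' - β₁) - Real.sin β₁ * Real.sin (γ' - β)
        = Real.sin γ' * Real.sin (β - β₁) := by
      simp only [Real.sin_sub]; ring
    have hb : γ' - β₁ = α₁ := by linarith
    rw [hb] at e
    linear_combination -e - hstar
  have hmono := Real.strictMonoOn_sin.monotoneOn
  have hπ2 : (0:ℝ) < π/2 := by positivity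
  have hsα₁ : 0 ≤ Real.sin α₁ := Real.sin_nonneg_of_nonneg_of_le_pi hα₁0 hα₁π.le
  have hsβ₁ : 0 ≤ Real.sin β₁ := Real.sin_nonneg_of_nonneg_of_le_pi hβ₁0 hβ₁π.le
  rcases le_or_gt γ γ' with hle | hlt
  · -- γ ≤ γ' : show α ≤ α₁ and β ≤ β₁
    have hs1 : Real.sin β ≤ Real.sin (γ' - α) :=
      hmono ⟨by linarith, hβh.le⟩ ⟨by linarith, h2.le⟩ (by linarith)
    have hs2 : Real.sin α ≤ Real.sin (γ' - β) :=
      hmono ⟨by linarith, hαh.le⟩ ⟨by linarith, h4.le⟩ (by linarith)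
    have hαα₁ : α ≤ α₁ := by
      by_contra h
      push_neg at h
      have hpos : 0 < Real.sin (α - α₁) :=
        Real.sin_pos_of_pos_of_lt_pi (by linarith) (by linarith)
      have hr : Real.sin α₁ * (Real.sin β - Real.sin (γ' - α)) ≤ 0 :=
        mul_nonpos_iff.2 (Or.inl ⟨hsα₁, by linarith⟩)
      have hl : 0 < Real.sin γ' * Real.sin (α - α₁) := mul_pos hsγ' hpos
      linarith
    have hββ₁ : β ≤ β₁ := by
      by_contra h
      push_neg at h
      have hpos : 0 < Real.sin (β - β₁) :=
        Real.sin_pos_of_pos_of_lt_pi (by linarith) (by linarith)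
      have hr : Real.sin β₁ * (Real.sin α - Real.sin (γ' - β)) ≤ 0 :=
        mul_nonpos_iff.2 (Or.inl ⟨hsβ₁, by linarith⟩)
      have hl : 0 < Real.sin γ' * Real.sin (β - β₁) := mul_pos hsγ' hpos
      linarith
    constructor
    · rw [abs_of_nonpos (by linarith), abs_of_nonpos (by linarith)]; linarith
    · rw [abs_of_nonpos (by linarith), abs_of_nonpos (by linarith)]; linarith
  · -- γ' < γ : show α₁ ≤ α and β₁ ≤ β
    have hs1 : Real.sin (γ' - α) ≤ Real.sin β :=
      hmono ⟨by linarith, h2.le⟩ ⟨by linarith, hβh.le⟩ (by linarith)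
    have hs2 : Real.sin (γ' - β) ≤ Real.sin α :=
      hmono ⟨by linarith, h4.le⟩ ⟨by linarith, hαh.le⟩ (by linarith)
    have hαα₁ : α₁ ≤ α := by
      by_contra h
      push_neg at h
      have hpos : 0 < Real.sin (α₁ - α) :=
        Real.sin_pos_of_pos_of_lt_pi (by linarith) (by linarith)
      have hneg : Real.sin (α - α₁) = - Real.sin (α₁ - α) := by
        rw [show α - α₁ = -(α₁ - α) by ring, Real.sin_neg]
      have hr : 0 ≤ Real.sin α₁ * (Real.sin β - Real.sin (γ' - α)) :=
        mul_nonneg hsα₁ (by linarith)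
      have hl : Real.sin γ' * Real.sin (α - α₁) < 0 :=
        mul_neg_of_pos_of_neg hsγ' (by rw [hneg]; linarith)
      linarith
    have hββ₁ : β₁ ≤ β := by
      by_contra h
      push_neg at h
      have hpos : 0 < Real.sin (β₁ - β) :=
        Real.sin_pos_of_pos_of_lt_pi (by linarith) (by linarith)
      have hneg : Real.sin (β - β₁) = - Real.sin (β₁ - β) := by
        rw [show β - β₁ = -(β₁ - β) by ring, Real.sin_neg]
      have hr : 0 ≤ Real.sin β₁ * (Real.sin α - Real.sin (γ' - β)) :=
        mul_nonneg hsβ₁ (by linarith)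
      have hl : Real.sin γ' * Real.sin (β - β₁) < 0 :=
        mul_neg_of_pos_of_neg hsγ' (by rw [hneg]; linarith)
      linarith
    constructor
    · rw [abs_of_nonneg (by linarith), abs_of_nonneg (by linarith)]; linarith
    · rw [abs_of_nonneg (by linarith), abs_of_nonneg (by linarith)]; linarith

/-- Lemma 4 (affin-3) of Belenkiy–Burago: for two nondegenerate planar triangles
with `dist A C = dist A' C'`, `dist A B = dist A' B'`, a point `D` strictly
between `B` and `C`, and `D'` the image of `D` under the affine transformation
mapping `ABC` onto `A'B'C'`, with `α = ∠BAD`, `β = ∠CAD`, `α₁ = ∠B'A'D'`,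
`β₁ = ∠C'A'D'`, if `α < π/2`, `β < π/2`, `0 < ∠B'A'C' − α < π/2`,
`0 < ∠B'A'C' − β < π/2`, then `|α − α₁| ≤ |∠BAC − ∠B'A'C'|` and
`|β − β₁| ≤ |∠BAC − ∠B'A'C'|`. -/
theorem stmt2
    (A B C A' B' C' D : EuclideanSpace ℝ (Fin 2))
    (hABC : AffineIndependent ℝ ![A, B, C])
    (hA'B'C' : AffineIndependent ℝ ![A', B', C'])
    (hAC : dist A C = dist A' C')
    (hAB : dist A B = dist A' B')
    (hD : Sbtw ℝ B D C)
    (f : EuclideanSpace ℝ (Fin 2) →ᵃ[ℝ] EuclideanSpace ℝ (Fin 2))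
    (hfA : f A = A') (hfB : f B = B') (hfC : f C = C')
    (D' : EuclideanSpace ℝ (Fin 2)) (hD' : D' = f D)
    (hα : ∠ B A D < π / 2) (hβ : ∠ C A D < π / 2)
    (hα1 : 0 < ∠ B' A' C' - ∠ B A D) (hα2 : ∠ B' A' C' - ∠ B A D < π / 2)
    (hβ1 : 0 < ∠ B' A' C' - ∠ C A D) (hβ2 : ∠ B' A' C' - ∠ C A D < π / 2) :
    |∠ B A D - ∠ B' A' D'| ≤ |∠ B A C - ∠ B' A' C'| ∧
      |∠ C A D - ∠ C' A' D'| ≤ |∠ B A C - ∠ B' A' C'| := by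
  obtain ⟨t, ht01, hDt⟩ := hD.mem_image_Ioo
  obtain ⟨ht0, ht1⟩ := ht01
  -- non-collinearity
  have hncol : ¬ Collinear ℝ ({A, B, C} : Set (EuclideanSpace ℝ (Fin 2))) :=
    affineIndependent_iff_not_collinear_set.1 hABC
  have hncol' : ¬ Collinear ℝ ({A', B', C'} : Set (EuclideanSpace ℝ (Fin 2))) :=
    affineIndependent_iff_not_collinear_set.1 hA'B'C'
  have hncolBAC : ¬ Collinear ℝ ({B, A, C} : Set (EuclideanSpace ℝ (Fin 2))) := fun h =>
    hncol (by rwa [Set.insert_comm] at h)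
  have hncolBAC' : ¬ Collinear ℝ ({B', A', C'} : Set (EuclideanSpace ℝ (Fin 2))) := fun h =>
    hncol' (by rwa [Set.insert_comm] at h)
  -- distinctness
  have hBA : B ≠ A := by
    intro h
    exact (by decide : ¬(1:Fin 3) = 0) (hABC.injective (show ![A, B, C] 1 = ![A, B, C] 0 by
      simp [Matrix.cons_val_one, Matrix.cons_val_zero, Matrix.head_cons, h]))
  have hCA : C ≠ A := by
    intro h
    exact (by decide : ¬(2:Fin 3) = 0) (hABC.injective (show ![A, B, C] 2 = ![A, B, C] 0 by
      simp [Matrix.cons_val_zero, h]))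
  have hBA' : B' ≠ A' := by
    intro h
    exact (by decide : ¬(1:Fin 3) = 0) (hA'B'C'.injective (show ![A', B', C'] 1 = ![A', B', C'] 0 by
      simp [Matrix.cons_val_one, Matrix.cons_val_zero, Matrix.head_cons, h]))
  have hCA' : C' ≠ A' := by
    intro h
    exact (by decide : ¬(2:Fin 3) = 0) (hA'B'C'.injective (show ![A', B', C'] 2 = ![A', B', C'] 0 by
      simp [Matrix.cons_val_zero, h]))
  have hDA : D ≠ A := by
    intro h
    have hc : Collinear ℝ ({B, D, C} : Set (EuclideanSpace ℝ (Fin 2))) := hD.wbtw.collinear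
    rw [h] at hc
    exact hncolBAC hc
  have hDA' : D' ≠ A' := by
    intro h
    have hw : Wbtw ℝ (f B) (f D) (f C) := hD.wbtw.map f
    rw [hfB, hfC, ← hD'] at hw
    have hc : Collinear ℝ ({B', D', C'} : Set (EuclideanSpace ℝ (Fin 2))) := hw.collinear
    rw [h] at hc
    exact hncolBAC' hc
  -- vectors
  have hDvec : D -ᵥ A = (1-t) • (B -ᵥ A) + t • (C -ᵥ A) := by
    rw [← hDt, AffineMap.lineMap_apply, vadd_vsub_assoc,
      ← vsub_sub_vsub_cancel_right C B A]
    module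
  have hD'vec : D' -ᵥ A' = (1-t) • (B' -ᵥ A') + t • (C' -ᵥ A') := by
    rw [hD', ← hDt, AffineMap.apply_lineMap, hfB, hfC, AffineMap.lineMap_apply, vadd_vsub_assoc,
      ← vsub_sub_vsub_cancel_right C' B' A']
    module
  -- angle bounds for ∠BAC and ∠B'A'C'
  have hγbounds : 0 < ∠ B A C ∧ ∠ B A C < π := by
    constructor
    · rcases (EuclideanGeometry.angle_nonneg B A C).lt_or_eq with h | h
      · exact h
      · exact absurd (EuclideanGeometry.collinear_iff_eq_or_eq_or_angle_eq_zero_or_angle_eq_pi.2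
          (Or.inr (Or.inr (Or.inl h.symm)))) hncolBAC
    · rcases (EuclideanGeometry.angle_le_pi B A C).lt_or_eq with h | h
      · exact h
      · exact absurd (EuclideanGeometry.collinear_iff_eq_or_eq_or_angle_eq_zero_or_angle_eq_pi.2
          (Or.inr (Or.inr (Or.inr h)))) hncolBAC
  have hγ'bounds : 0 < ∠ B' A' C' ∧ ∠ B' A' C' < π := by
    constructor
    · rcases (EuclideanGeometry.angle_nonneg B' A' C').lt_or_eq with h | h
      · exact h
      · exact absurd (EuclideanGeometry.collinear_iff_eq_or_eq_or_angle_eq_zero_or_angle_eq_pi.2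
          (Or.inr (Or.inr (Or.inl h.symm)))) hncolBAC'
    · rcases (EuclideanGeometry.angle_le_pi B' A' C').lt_or_eq with h | h
      · exact h
      · exact absurd (EuclideanGeometry.collinear_iff_eq_or_eq_or_angle_eq_zero_or_angle_eq_pi.2
          (Or.inr (Or.inr (Or.inr h)))) hncolBAC'
  -- apply the vector lemma to both triangles
  obtain ⟨hαs, hβs, hsplit⟩ := tri_aux (B -ᵥ A) (C -ᵥ A) ht0 ht1
  obtain ⟨hα's, hβ's, hsplit'⟩ := tri_aux (B' -ᵥ A') (C' -ᵥ A') ht0 ht1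
  rw [← hDvec] at hαs hβs hsplit
  rw [← hD'vec] at hα's hβ's hsplit'
  have hu0 : B -ᵥ A ≠ 0 := vsub_ne_zero.2 hBA
  have hw0 : C -ᵥ A ≠ 0 := vsub_ne_zero.2 hCA
  have hd0 : D -ᵥ A ≠ 0 := vsub_ne_zero.2 hDA
  have hu'0 : B' -ᵥ A' ≠ 0 := vsub_ne_zero.2 hBA'
  have hw'0 : C' -ᵥ A' ≠ 0 := vsub_ne_zero.2 hCA'
  have hd'0 : D' -ᵥ A' ≠ 0 := vsub_ne_zero.2 hDA'
  have hsum : ∠ B A D + ∠ C A D = ∠ B A C := by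
    have h := hsplit hu0 hw0 hd0 hγbounds.1 hγbounds.2
    rw [show InnerProductGeometry.angle (D -ᵥ A) (C -ᵥ A)
        = InnerProductGeometry.angle (C -ᵥ A) (D -ᵥ A) from
      InnerProductGeometry.angle_comm _ _] at h
    exact h
  have hsum' : ∠ B' A' D' + ∠ C' A' D' = ∠ B' A' C' := by
    have h := hsplit' hu'0 hw'0 hd'0 hγ'bounds.1 hγ'bounds.2
    rw [show InnerProductGeometry.angle (D' -ᵥ A') (C' -ᵥ A')
        = InnerProductGeometry.angle (C' -ᵥ A') (D' -ᵥ A') from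
      InnerProductGeometry.angle_comm _ _] at h
    exact h
  -- the star identity
  have hnu : ‖B -ᵥ A‖ = ‖B' -ᵥ A'‖ := by
    rw [← dist_eq_norm_vsub, ← dist_eq_norm_vsub, dist_comm B A, dist_comm B' A', hAB]
  have hnw : ‖C -ᵥ A‖ = ‖C' -ᵥ A'‖ := by
    rw [← dist_eq_norm_vsub, ← dist_eq_norm_vsub, dist_comm C A, dist_comm C' A', hAC]
  rw [← hnu, ← hnw] at hα's hβ's
  have ha : (0:ℝ) < ‖B -ᵥ A‖ := norm_pos_iff.2 hu0
  have hc : (0:ℝ) < ‖C -ᵥ A‖ := norm_pos_iff.2 hw0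
  have hm : (0:ℝ) < ‖D -ᵥ A‖ := norm_pos_iff.2 hd0
  have hm' : (0:ℝ) < ‖D' -ᵥ A'‖ := norm_pos_iff.2 hd'0
  have hQ : (0:ℝ) < ‖B -ᵥ A‖ * ‖D -ᵥ A‖ * (‖D' -ᵥ A'‖ * ‖C -ᵥ A‖) := by positivity
  set S : ℝ := Real.sqrt (‖B -ᵥ A‖^2 * ‖C -ᵥ A‖^2 - (inner ℝ (B -ᵥ A) (C -ᵥ A) : ℝ)^2)
  set S' : ℝ := Real.sqrt (‖B -ᵥ A‖^2 * ‖C -ᵥ A‖^2 - (inner ℝ (B' -ᵥ A') (C' -ᵥ A') : ℝ)^2)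
  have key : Real.sin (∠ B A D) * Real.sin (∠ C' A' D')
        * (‖B -ᵥ A‖ * ‖D -ᵥ A‖ * (‖D' -ᵥ A'‖ * ‖C -ᵥ A‖))
      = Real.sin (∠ B' A' D') * Real.sin (∠ C A D)
        * (‖B -ᵥ A‖ * ‖D -ᵥ A‖ * (‖D' -ᵥ A'‖ * ‖C -ᵥ A‖)) := by
    have hβ'c : Real.sin (∠ C' A' D') = Real.sin (InnerProductGeometry.angle (D' -ᵥ A') (C' -ᵥ A')) := by
      rw [show ∠ C' A' D' = InnerProductGeometry.angle (C' -ᵥ A') (D' -ᵥ A') from rfl,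
        InnerProductGeometry.angle_comm]
    have hβc : Real.sin (∠ C A D) = Real.sin (InnerProductGeometry.angle (D -ᵥ A) (C -ᵥ A)) := by
      rw [show ∠ C A D = InnerProductGeometry.angle (C -ᵥ A) (D -ᵥ A) from rfl,
        InnerProductGeometry.angle_comm]
    rw [show ∠ B A D = InnerProductGeometry.angle (B -ᵥ A) (D -ᵥ A) from rfl,
      show ∠ B' A' D' = InnerProductGeometry.angle (B' -ᵥ A') (D' -ᵥ A') from rfl, hβ'c, hβc]
    linear_combination (Real.sin (InnerProductGeometry.angle (D' -ᵥ A') (C' -ᵥ A'))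
        * (‖D' -ᵥ A'‖ * ‖C -ᵥ A‖)) * hαs
      + (t * S) * hβ's
      - (Real.sin (InnerProductGeometry.angle (D -ᵥ A) (C -ᵥ A)) * (‖D -ᵥ A‖ * ‖C -ᵥ A‖)) * hα's
      - (t * S') * hβs
  have hstar : Real.sin (∠ B A D) * Real.sin (∠ C' A' D')
      = Real.sin (∠ B' A' D') * Real.sin (∠ C A D) :=
    mul_right_cancel₀ hQ.ne' key
  exact trig_key hsum hsum' hstar (EuclideanGeometry.angle_nonneg _ _ _)
    (EuclideanGeometry.angle_nonneg _ _ _) (EuclideanGeometry.angle_nonneg _ _ _)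
    (EuclideanGeometry.angle_nonneg _ _ _) hγ'bounds.2 hα hβ hα1 hα2 hβ1 hβ2
end

section
/- Let ABC and A'B'C' be nondegenerate triangles in the Euclidean plane with dist(A,C) = dist(A',C') and dist(A,B) = dist(A',B'). Let D be a point strictly between B and C, let f be the affine transformation mapping ABC onto A'B'C', and let D' = f(D). Set α = ∠BAD, β = ∠CAD, α₁ = ∠B'A'D', β₁ = ∠C'A'D'. Assume α < π/2, β < π/2, 0 < ∠B'A'C' − α < π/2, 0 < ∠B'A'C' − β < π/2, and additionally ∠B'A'C' ≥ ∠BAC. Then α₁ ≥ α and β₁ ≥ β. -/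
open EuclideanGeometry Real

section helpers

variable {V : Type*} [NormedAddCommGroup V] [InnerProductSpace ℝ V]

/-- A pure trigonometric identity. -/
lemma sin_cross (s x y : ℝ) :
    Real.sin y * Real.sin (s - x) - Real.sin x * Real.sin (s - y)
      = Real.sin s * Real.sin (y - x) := by
  rw [Real.sin_sub, Real.sin_sub, Real.sin_sub]; ring

/-- Angle addition for a cevian, in a real inner product space. -/
lemma angle_sum_aux (A B C : V) (t : ℝ) (ht0 : 0 < t) (ht1 : t < 1)
    (h : ¬Collinear ℝ ({A, B, C} : Set V)) :
    ∠ B A (AffineMap.lineMap B C t) + ∠ C A (AffineMap.lineMap B C t) = ∠ B A C := by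
  set D := AffineMap.lineMap B C t with hDdef
  have hBC : B ≠ C := by
    rintro rfl
    exact h (by simpa using collinear_pair ℝ A B)
  have hBA : B ≠ A := by
    rintro rfl
    exact h (by simpa [Set.insert_comm] using collinear_pair ℝ B C)
  have hCA : C ≠ A := by
    rintro rfl
    exact h (by simpa [Set.insert_comm, Set.pair_comm] using collinear_pair ℝ B C)
  have hDB : D -ᵥ B = t • (C -ᵥ B) := by
    simp [hDdef, AffineMap.lineMap_apply, vadd_vsub]
  have hDC : D -ᵥ C = (1 - t) • (B -ᵥ C) := by
    simp only [hDdef, AffineMap.lineMap_apply, vsub_eq_sub, vadd_eq_add]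
    module
  have hSb : Sbtw ℝ B D C := sbtw_lineMap_iff.2 ⟨hBC, ht0, ht1⟩
  have hDA : D ≠ A := by
    intro heq
    apply h
    have hc := hSb.wbtw.collinear
    rw [heq] at hc
    simpa [Set.insert_comm] using hc
  have T1 := EuclideanGeometry.angle_add_angle_add_angle_eq_pi (p₁ := A) D hBA
  have T2 := EuclideanGeometry.angle_add_angle_add_angle_eq_pi (p₁ := A) D hCA
  have T3 := EuclideanGeometry.angle_add_angle_add_angle_eq_pi (p₁ := A) C hBA
  have L : ∠ A D B + ∠ A D C = π :=
    EuclideanGeometry.angle_add_angle_eq_pi_of_angle_eq_pi A hSb.angle₁₂₃_eq_pi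
  have R1 : ∠ A B D = ∠ A B C := by
    show InnerProductGeometry.angle (A -ᵥ B) (D -ᵥ B) = InnerProductGeometry.angle (A -ᵥ B) (C -ᵥ B)
    rw [hDB]
    exact InnerProductGeometry.angle_smul_right_of_pos _ _ ht0
  have R2 : ∠ A C D = ∠ A C B := by
    show InnerProductGeometry.angle (A -ᵥ C) (D -ᵥ C) = InnerProductGeometry.angle (A -ᵥ C) (B -ᵥ C)
    rw [hDC]
    exact InnerProductGeometry.angle_smul_right_of_pos _ _ (by linarith)
  have c1 : ∠ D A B = ∠ B A D := angle_comm _ _ _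
  have c2 : ∠ D A C = ∠ C A D := angle_comm _ _ _
  have c3 : ∠ C A B = ∠ B A C := angle_comm _ _ _
  have c4 : ∠ B D A = ∠ A D B := angle_comm _ _ _
  have c5 : ∠ C D A = ∠ A D C := angle_comm _ _ _
  have c6 : ∠ B C A = ∠ A C B := angle_comm _ _ _
  linarith

/-- The arithmetic core. -/
lemma final_aux {s a b a1 b1 : ℝ} (ha0 : 0 ≤ a) (hb0 : 0 ≤ b) (ha10 : 0 ≤ a1) (hb10 : 0 ≤ b1)
    (hsum : a1 + b1 = s)
    (hle : a + b ≤ s)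
    (hspos : 0 < Real.sin s) (hsa1 : 0 < Real.sin a1) (hsb1 : 0 < Real.sin b1)
    (ha : a < π / 2) (hb : b < π / 2) (ha2 : s - a < π / 2) (hb2 : s - b < π / 2)
    (hrel : Real.sin a * Real.sin b1 = Real.sin b * Real.sin a1) :
    a ≤ a1 ∧ b ≤ b1 := by
  have hpi := Real.pi_pos
  constructor
  · have h1 : Real.sin b ≤ Real.sin (s - a) := by
      refine Real.strictMonoOn_sin.monotoneOn ⟨by linarith, hb.le⟩ ⟨by linarith, ha2.le⟩
        (by linarith)
    have key := sin_cross s a a1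
    have hb1e : Real.sin (s - a1) = Real.sin b1 := by rw [show s - a1 = b1 by linarith]
    rw [hb1e] at key
    have h2 : 0 ≤ Real.sin s * Real.sin (a1 - a) := by nlinarith
    have h3 : 0 ≤ Real.sin (a1 - a) := by nlinarith
    by_contra hcon
    push_neg at hcon
    have : Real.sin (a1 - a) < 0 :=
      Real.sin_neg_of_neg_of_neg_pi_lt (by linarith) (by linarith)
    linarith
  · have h1 : Real.sin a ≤ Real.sin (s - b) := by
      refine Real.strictMonoOn_sin.monotoneOn ⟨by linarith, ha.le⟩ ⟨by linarith, hb2.le⟩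
        (by linarith)
    have key := sin_cross s b b1
    have ha1e : Real.sin (s - b1) = Real.sin a1 := by rw [show s - b1 = a1 by linarith]
    rw [ha1e] at key
    have h2 : 0 ≤ Real.sin s * Real.sin (b1 - b) := by nlinarith
    have h3 : 0 ≤ Real.sin (b1 - b) := by nlinarith
    by_contra hcon
    push_neg at hcon
    have : Real.sin (b1 - b) < 0 :=
      Real.sin_neg_of_neg_of_neg_pi_lt (by linarith) (by linarith)
    linarith

variable [Fact (Module.finrank ℝ V = 2)]

lemma sin_angle_mul_eq_abs_areaForm (o : Orientation ℝ V (Fin 2)) (x y : V) :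
    Real.sin (InnerProductGeometry.angle x y) * (‖x‖ * ‖y‖) = |o.areaForm x y| := by
  rw [InnerProductGeometry.sin_angle_mul_norm_mul_norm]
  have h := o.inner_sq_add_areaForm_sq x y
  have hx := real_inner_self_eq_norm_sq x
  have hy := real_inner_self_eq_norm_sq y
  have he : (inner ℝ x x : ℝ) * inner ℝ y y - inner ℝ x y * inner ℝ x y = (o.areaForm x y) ^ 2 := by
    rw [hx, hy]; nlinarith [h]
  rw [he, Real.sqrt_sq_eq_abs]

lemma sin_angle_lineMap_left (o : Orientation ℝ V (Fin 2)) (A B C : V) {t : ℝ} (ht0 : 0 < t) :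
    Real.sin (∠ B A (AffineMap.lineMap B C t)) *
      (‖B -ᵥ A‖ * ‖AffineMap.lineMap B C t -ᵥ A‖)
      = t * |o.areaForm (B -ᵥ A) (C -ᵥ A)| := by
  have hrep : AffineMap.lineMap B C t -ᵥ A
      = t • ((C -ᵥ A) - (B -ᵥ A)) + (B -ᵥ A) := by
    simp only [AffineMap.lineMap_apply, vsub_eq_sub, vadd_eq_add]
    module
  have hK : o.areaForm (B -ᵥ A) (AffineMap.lineMap B C t -ᵥ A)
      = t * o.areaForm (B -ᵥ A) (C -ᵥ A) := by
    rw [hrep]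
    simp only [vsub_eq_sub, map_add, map_smul, map_sub, LinearMap.sub_apply, LinearMap.add_apply,
      LinearMap.smul_apply, Orientation.areaForm_apply_self, smul_eq_mul,
      o.areaForm_swap B A, o.areaForm_swap C A, o.areaForm_swap C B]
    ring
  have h := sin_angle_mul_eq_abs_areaForm o (B -ᵥ A) (AffineMap.lineMap B C t -ᵥ A)
  rw [hK, abs_mul, abs_of_pos ht0] at h
  exact h

lemma sin_angle_lineMap_right (o : Orientation ℝ V (Fin 2)) (A B C : V) {t : ℝ} (ht1 : t < 1) :
    Real.sin (∠ C A (AffineMap.lineMap B C t)) *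
      (‖C -ᵥ A‖ * ‖AffineMap.lineMap B C t -ᵥ A‖)
      = (1 - t) * |o.areaForm (B -ᵥ A) (C -ᵥ A)| := by
  have hrep : AffineMap.lineMap B C t -ᵥ A
      = t • ((C -ᵥ A) - (B -ᵥ A)) + (B -ᵥ A) := by
    simp only [AffineMap.lineMap_apply, vsub_eq_sub, vadd_eq_add]
    module
  have hK : o.areaForm (C -ᵥ A) (AffineMap.lineMap B C t -ᵥ A)
      = -((1 - t) * o.areaForm (B -ᵥ A) (C -ᵥ A)) := by
    rw [hrep]
    simp only [vsub_eq_sub, map_add, map_smul, map_sub, LinearMap.sub_apply, LinearMap.add_apply,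
      LinearMap.smul_apply, Orientation.areaForm_apply_self, smul_eq_mul,
      o.areaForm_swap B A, o.areaForm_swap C A, o.areaForm_swap C B]
    ring
  have h := sin_angle_mul_eq_abs_areaForm o (C -ᵥ A) (AffineMap.lineMap B C t -ᵥ A)
  rw [hK, abs_neg, abs_mul, abs_of_pos (by linarith : (0:ℝ) < 1 - t)] at h
  exact h

end helpers

set_option maxHeartbeats 1600000 in
/-- Step in the proof of Lemma 4 (affin-3) of Belenkiy–Burago: under the
hypotheses of that lemma and the additional assumption `∠B'A'C' ≥ ∠BAC`, the
angles of the image cevian satisfy `α₁ ≥ α` and `β₁ ≥ β`. -/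
theorem stmt3
    (A B C A' B' C' D : EuclideanSpace ℝ (Fin 2))
    (hABC : AffineIndependent ℝ ![A, B, C])
    (hA'B'C' : AffineIndependent ℝ ![A', B', C'])
    (hAC : dist A C = dist A' C')
    (hAB : dist A B = dist A' B')
    (hD : Sbtw ℝ B D C)
    (f : EuclideanSpace ℝ (Fin 2) →ᵃ[ℝ] EuclideanSpace ℝ (Fin 2))
    (hfA : f A = A') (hfB : f B = B') (hfC : f C = C')
    (D' : EuclideanSpace ℝ (Fin 2)) (hD' : D' = f D)
    (hα : ∠ B A D < π / 2) (hβ : ∠ C A D < π / 2)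
    (hα1 : 0 < ∠ B' A' C' - ∠ B A D) (hα2 : ∠ B' A' C' - ∠ B A D < π / 2)
    (hβ1 : 0 < ∠ B' A' C' - ∠ C A D) (hβ2 : ∠ B' A' C' - ∠ C A D < π / 2)
    (hge : ∠ B A C ≤ ∠ B' A' C') :
    ∠ B A D ≤ ∠ B' A' D' ∧ ∠ C A D ≤ ∠ C' A' D' := by
  haveI : Fact (Module.finrank ℝ (EuclideanSpace ℝ (Fin 2)) = 2) := ⟨finrank_euclideanSpace_fin⟩
  obtain ⟨o⟩ : Nonempty (Orientation ℝ (EuclideanSpace ℝ (Fin 2)) (Fin 2)) :=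
    ⟨(EuclideanSpace.basisFun (Fin 2) ℝ).toBasis.orientation⟩
  have hnc : ¬Collinear ℝ ({A, B, C} : Set (EuclideanSpace ℝ (Fin 2))) :=
    affineIndependent_iff_not_collinear_set.1 hABC
  have hnc' : ¬Collinear ℝ ({A', B', C'} : Set (EuclideanSpace ℝ (Fin 2))) :=
    affineIndependent_iff_not_collinear_set.1 hA'B'C'
  -- extract the parameter of the cevian point
  obtain ⟨t, htI, hteq⟩ := hD.wbtw
  have ht0 : 0 < t := by
    rcases htI.1.lt_or_eq with h | h
    · exact h
    · exfalso; apply hD.ne_left; rw [← hteq, ← h]; simp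
  have ht1 : t < 1 := by
    rcases htI.2.lt_or_eq with h | h
    · exact h
    · exfalso; apply hD.ne_right; rw [← hteq, h]; simp
  have hD'line : D' = AffineMap.lineMap B' C' t := by
    rw [hD', ← hteq, AffineMap.apply_lineMap, hfB, hfC]
  -- angle sums
  have hsum : ∠ B A D + ∠ C A D = ∠ B A C := by
    rw [← hteq]; exact angle_sum_aux A B C t ht0 ht1 hnc
  have hsum' : ∠ B' A' D' + ∠ C' A' D' = ∠ B' A' C' := by
    rw [hD'line]; exact angle_sum_aux A' B' C' t ht0 ht1 hnc'
  -- sine identities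
  have e0 : Real.sin (∠ B A C) * (‖B -ᵥ A‖ * ‖C -ᵥ A‖)
      = |o.areaForm (B -ᵥ A) (C -ᵥ A)| := sin_angle_mul_eq_abs_areaForm o _ _
  have e0' : Real.sin (∠ B' A' C') * (‖B' -ᵥ A'‖ * ‖C' -ᵥ A'‖)
      = |o.areaForm (B' -ᵥ A') (C' -ᵥ A')| := sin_angle_mul_eq_abs_areaForm o _ _
  have e1 : Real.sin (∠ B A D) * (‖B -ᵥ A‖ * ‖D -ᵥ A‖)
      = t * |o.areaForm (B -ᵥ A) (C -ᵥ A)| := by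
    rw [← hteq]; exact sin_angle_lineMap_left o A B C ht0
  have e2 : Real.sin (∠ C A D) * (‖C -ᵥ A‖ * ‖D -ᵥ A‖)
      = (1 - t) * |o.areaForm (B -ᵥ A) (C -ᵥ A)| := by
    rw [← hteq]; exact sin_angle_lineMap_right o A B C ht1
  have e1' : Real.sin (∠ B' A' D') * (‖B' -ᵥ A'‖ * ‖D' -ᵥ A'‖)
      = t * |o.areaForm (B' -ᵥ A') (C' -ᵥ A')| := by
    rw [hD'line]; exact sin_angle_lineMap_left o A' B' C' ht0
  have e2' : Real.sin (∠ C' A' D') * (‖C' -ᵥ A'‖ * ‖D' -ᵥ A'‖)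
      = (1 - t) * |o.areaForm (B' -ᵥ A') (C' -ᵥ A')| := by
    rw [hD'line]; exact sin_angle_lineMap_right o A' B' C' ht1
  -- norms
  have huu' : ‖B' -ᵥ A'‖ = ‖B -ᵥ A‖ := by
    rw [← dist_eq_norm_vsub, ← dist_eq_norm_vsub, dist_comm B' A', dist_comm B A, ← hAB]
  have hww' : ‖C' -ᵥ A'‖ = ‖C -ᵥ A‖ := by
    rw [← dist_eq_norm_vsub, ← dist_eq_norm_vsub, dist_comm C' A', dist_comm C A, ← hAC]
  -- positivity
  have hBAne : B ≠ A := by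
    rintro rfl
    exact hnc (by simpa [Set.insert_comm] using collinear_pair ℝ B C)
  have hCAne : C ≠ A := by
    rintro rfl
    exact hnc (by simpa [Set.insert_comm, Set.pair_comm] using collinear_pair ℝ B C)
  have hB'A'ne : B' ≠ A' := by
    rintro rfl
    exact hnc' (by simpa [Set.insert_comm] using collinear_pair ℝ B' C')
  have hC'A'ne : C' ≠ A' := by
    rintro rfl
    exact hnc' (by simpa [Set.insert_comm, Set.pair_comm] using collinear_pair ℝ B' C')
  have hu : 0 < ‖B -ᵥ A‖ := by rw [norm_pos_iff]; exact vsub_ne_zero.2 hBAne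
  have hw : 0 < ‖C -ᵥ A‖ := by rw [norm_pos_iff]; exact vsub_ne_zero.2 hCAne
  have hu' : 0 < ‖B' -ᵥ A'‖ := by rw [norm_pos_iff]; exact vsub_ne_zero.2 hB'A'ne
  have hw' : 0 < ‖C' -ᵥ A'‖ := by rw [norm_pos_iff]; exact vsub_ne_zero.2 hC'A'ne
  have hsBAC : 0 < Real.sin (∠ B A C) := by
    apply EuclideanGeometry.sin_pos_of_not_collinear
    simpa [Set.insert_comm] using hnc
  have hsB'A'C' : 0 < Real.sin (∠ B' A' C') := by
    apply EuclideanGeometry.sin_pos_of_not_collinear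
    simpa [Set.insert_comm] using hnc'
  have hK : 0 < |o.areaForm (B -ᵥ A) (C -ᵥ A)| := by
    rw [← e0]; exact mul_pos hsBAC (mul_pos hu hw)
  have hK' : 0 < |o.areaForm (B' -ᵥ A') (C' -ᵥ A')| := by
    rw [← e0']; exact mul_pos hsB'A'C' (mul_pos hu' hw')
  have hd : 0 < ‖D -ᵥ A‖ := by
    rcases (norm_nonneg (D -ᵥ A)).lt_or_eq with h | h
    · exact h
    · exfalso
      have := mul_pos ht0 hK
      rw [← e1, ← h] at this
      simp at this
  have hd' : 0 < ‖D' -ᵥ A'‖ := by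
    rcases (norm_nonneg (D' -ᵥ A')).lt_or_eq with h | h
    · exact h
    · exfalso
      have := mul_pos ht0 hK'
      rw [← e1', ← h] at this
      simp at this
  have hsa1 : 0 < Real.sin (∠ B' A' D') := by
    have h1 := mul_pos ht0 hK'
    rw [← e1'] at h1
    have h2 := mul_pos hu' hd'
    by_contra hcon
    push_neg at hcon
    have h3 : Real.sin (∠ B' A' D') * (‖B' -ᵥ A'‖ * ‖D' -ᵥ A'‖) ≤ 0 :=
      mul_nonpos_iff.2 (Or.inr ⟨hcon, h2.le⟩)
    linarith
  have hsb1 : 0 < Real.sin (∠ C' A' D') := by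
    have h1 := mul_pos (by linarith : (0:ℝ) < 1 - t) hK'
    rw [← e2'] at h1
    have h2 := mul_pos hw' hd'
    by_contra hcon
    push_neg at hcon
    have h3 : Real.sin (∠ C' A' D') * (‖C' -ᵥ A'‖ * ‖D' -ᵥ A'‖) ≤ 0 :=
      mul_nonpos_iff.2 (Or.inr ⟨hcon, h2.le⟩)
    linarith
  -- the key relation
  have hrel : Real.sin (∠ B A D) * Real.sin (∠ C' A' D')
      = Real.sin (∠ C A D) * Real.sin (∠ B' A' D') := by
    rw [huu'] at e1'
    rw [hww'] at e2'
    have hX : ‖B -ᵥ A‖ * ‖D -ᵥ A‖ * (‖C -ᵥ A‖ * ‖D' -ᵥ A'‖) ≠ 0 := by positivity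
    apply mul_right_cancel₀ hX
    calc Real.sin (∠ B A D) * Real.sin (∠ C' A' D') *
          (‖B -ᵥ A‖ * ‖D -ᵥ A‖ * (‖C -ᵥ A‖ * ‖D' -ᵥ A'‖))
        = (Real.sin (∠ B A D) * (‖B -ᵥ A‖ * ‖D -ᵥ A‖)) *
          (Real.sin (∠ C' A' D') * (‖C -ᵥ A‖ * ‖D' -ᵥ A'‖)) := by ring
      _ = (t * |o.areaForm (B -ᵥ A) (C -ᵥ A)|) *
          ((1 - t) * |o.areaForm (B' -ᵥ A') (C' -ᵥ A')|) := by rw [e1, e2']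
      _ = ((1 - t) * |o.areaForm (B -ᵥ A) (C -ᵥ A)|) *
          (t * |o.areaForm (B' -ᵥ A') (C' -ᵥ A')|) := by ring
      _ = (Real.sin (∠ C A D) * (‖C -ᵥ A‖ * ‖D -ᵥ A‖)) *
          (Real.sin (∠ B' A' D') * (‖B -ᵥ A‖ * ‖D' -ᵥ A'‖)) := by rw [e2, e1']
      _ = Real.sin (∠ C A D) * Real.sin (∠ B' A' D') *
          (‖B -ᵥ A‖ * ‖D -ᵥ A‖ * (‖C -ᵥ A‖ * ‖D' -ᵥ A'‖)) := by ring
  -- conclude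
  exact final_aux (angle_nonneg _ _ _) (angle_nonneg _ _ _) (angle_nonneg _ _ _)
    (angle_nonneg _ _ _) hsum' (hsum.le.trans hge) hsB'A'C' hsa1 hsb1 hα hβ hα2 hβ2 hrel
end

section
/- Let ABC and A'B'C' be nondegenerate triangles in the Euclidean plane with dist(A,C) = dist(A',C') and dist(A,B) = dist(A',B'). Let D be a point strictly between B and C, let f be the affine transformation mapping ABC onto A'B'C', and let D' = f(D). Then the sine ratio of the cevian is preserved: sin(∠BAD)·sin(∠C'A'D') = sin(∠CAD)·sin(∠B'A'D'). -/
open EuclideanGeometry Real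

private lemma key_sin {E : Type*} [NormedAddCommGroup E] [InnerProductSpace ℝ E]
    (u v : E) {t : ℝ} (ht : 0 ≤ t) :
    Real.sin (InnerProductGeometry.angle u ((1 - t) • u + t • v)) *
        (‖u‖ * ‖(1 - t) • u + t • v‖) =
      t * (Real.sin (InnerProductGeometry.angle u v) * (‖u‖ * ‖v‖)) := by
  rw [InnerProductGeometry.sin_angle_mul_norm_mul_norm,
    InnerProductGeometry.sin_angle_mul_norm_mul_norm]
  have h : (inner ℝ u u : ℝ) * inner ℝ ((1 - t) • u + t • v) ((1 - t) • u + t • v) -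
      (inner ℝ u ((1 - t) • u + t • v) : ℝ) * inner ℝ u ((1 - t) • u + t • v)
      = t ^ 2 * ((inner ℝ u u : ℝ) * inner ℝ v v - (inner ℝ u v : ℝ) * inner ℝ u v) := by
    simp only [inner_add_left, inner_add_right, real_inner_smul_left, real_inner_smul_right,
      real_inner_comm v u]
    ring
  rw [h, Real.sqrt_mul (sq_nonneg t), Real.sqrt_sq ht]

private lemma ne_of_sbtw_lineMap {A' B' C' : EuclideanSpace ℝ (Fin 2)} {t : ℝ}
    (hA'B'C' : AffineIndependent ℝ ![A', B', C']) :
    AffineMap.lineMap B' C' t ≠ A' := by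
  intro h
  apply (affineIndependent_iff_not_collinear_set.mp hA'B'C')
  have : Collinear ℝ {AffineMap.lineMap B' C' t, B', C'} :=
    collinear_insert_of_mem_affineSpan_pair (AffineMap.lineMap_mem_affineSpan_pair _ _ _)
  rw [h] at this
  exact this.subset (by intro x hx; simpa using hx)

/-- Preservation of the sine ratio of a cevian under the affine transformation
mapping a nondegenerate triangle `ABC` onto `A'B'C'` (with the two sides at `A`
of equal lengths): if `D` is strictly between `B` and `C` and `D' = f D`, then
`sin(∠BAD)·sin(∠C'A'D') = sin(∠CAD)·sin(∠B'A'D')`. -/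
theorem stmt4
    (A B C A' B' C' D : EuclideanSpace ℝ (Fin 2))
    (hABC : AffineIndependent ℝ ![A, B, C])
    (hA'B'C' : AffineIndependent ℝ ![A', B', C'])
    (hAC : dist A C = dist A' C')
    (hAB : dist A B = dist A' B')
    (hD : Sbtw ℝ B D C)
    (f : EuclideanSpace ℝ (Fin 2) →ᵃ[ℝ] EuclideanSpace ℝ (Fin 2))
    (hfA : f A = A') (hfB : f B = B') (hfC : f C = C')
    (D' : EuclideanSpace ℝ (Fin 2)) (hD' : D' = f D) :
    Real.sin (∠ B A D) * Real.sin (∠ C' A' D') =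
      Real.sin (∠ C A D) * Real.sin (∠ B' A' D') := by
  obtain ⟨t, ht, hDt⟩ := hD.mem_image_Ioo
  have hD'eq : D' = AffineMap.lineMap B' C' t := by
    rw [hD', ← hDt, ← hfB, ← hfC, AffineMap.apply_lineMap]
  -- vectors
  set u := B -ᵥ A with hu
  set v := C -ᵥ A with hv
  set u' := B' -ᵥ A' with hu'
  set v' := C' -ᵥ A' with hv'
  have hdD : D -ᵥ A = (1 - t) • u + t • v := by
    rw [← hDt]
    simp only [AffineMap.lineMap_apply, hu, hv]
    ext i
    simp [vsub_eq_sub, vadd_eq_add]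
    ring
  have hdD' : D' -ᵥ A' = (1 - t) • u' + t • v' := by
    rw [hD'eq]
    simp only [AffineMap.lineMap_apply, hu', hv']
    ext i
    simp [vsub_eq_sub, vadd_eq_add]
    ring
  have hdD2 : D -ᵥ A = (1 - (1 - t)) • v + (1 - t) • u := by
    rw [hdD]; ring_nf; rw [add_comm]
  have hdD2' : D' -ᵥ A' = (1 - (1 - t)) • v' + (1 - t) • u' := by
    rw [hdD']; ring_nf; rw [add_comm]
  have ht0 : (0:ℝ) ≤ t := le_of_lt ht.1
  have ht1 : (0:ℝ) ≤ 1 - t := by linarith [ht.2]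
  -- the four sine identities
  have h1 : Real.sin (∠ B A D) * (‖u‖ * ‖D -ᵥ A‖) =
      t * (Real.sin (InnerProductGeometry.angle u v) * (‖u‖ * ‖v‖)) := by
    rw [EuclideanGeometry.angle, hdD]; exact key_sin u v ht0
  have h2 : Real.sin (∠ C A D) * (‖v‖ * ‖D -ᵥ A‖) =
      (1 - t) * (Real.sin (InnerProductGeometry.angle v u) * (‖v‖ * ‖u‖)) := by
    rw [EuclideanGeometry.angle, hdD2]; exact key_sin v u ht1
  have h1' : Real.sin (∠ B' A' D') * (‖u'‖ * ‖D' -ᵥ A'‖) =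
      t * (Real.sin (InnerProductGeometry.angle u' v') * (‖u'‖ * ‖v'‖)) := by
    rw [EuclideanGeometry.angle, hdD']; exact key_sin u' v' ht0
  have h2' : Real.sin (∠ C' A' D') * (‖v'‖ * ‖D' -ᵥ A'‖) =
      (1 - t) * (Real.sin (InnerProductGeometry.angle v' u') * (‖v'‖ * ‖u'‖)) := by
    rw [EuclideanGeometry.angle, hdD2']; exact key_sin v' u' ht1
  -- norm equalities
  have hnu : ‖u'‖ = ‖u‖ := by
    rw [hu, hu', ← dist_eq_norm_vsub, ← dist_eq_norm_vsub, dist_comm B A, dist_comm B' A', hAB]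
  have hnv : ‖v'‖ = ‖v‖ := by
    rw [hv, hv', ← dist_eq_norm_vsub, ← dist_eq_norm_vsub, dist_comm C A, dist_comm C' A', hAC]
  -- nonvanishing
  have hBA : B ≠ A := fun h => by
    have := hABC.injective (show ![A, B, C] 1 = ![A, B, C] 0 by simpa using h)
    simp at this
  have hCA : C ≠ A := fun h => by
    have := hABC.injective (show ![A, B, C] 2 = ![A, B, C] 0 by simpa using h)
    simp at this
  have hun : ‖u‖ ≠ 0 := by simpa [hu] using vsub_ne_zero.mpr hBA
  have hvn : ‖v‖ ≠ 0 := by simpa [hv] using vsub_ne_zero.mpr hCA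
  have hDA : D ≠ A := by rw [← hDt]; exact ne_of_sbtw_lineMap hABC
  have hD'A' : D' ≠ A' := by rw [hD'eq]; exact ne_of_sbtw_lineMap hA'B'C'
  have hdn : ‖D -ᵥ A‖ ≠ 0 := by simpa using vsub_ne_zero.mpr hDA
  have hdn' : ‖D' -ᵥ A'‖ ≠ 0 := by simpa using vsub_ne_zero.mpr hD'A'
  -- combine
  have hc : (‖u‖ * ‖D -ᵥ A‖) * (‖v‖ * ‖D' -ᵥ A'‖) ≠ 0 := by
    positivity
  apply mul_right_cancel₀ hc
  have hcomm : InnerProductGeometry.angle v u = InnerProductGeometry.angle u v :=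
    InnerProductGeometry.angle_comm v u
  have hcomm' : InnerProductGeometry.angle v' u' = InnerProductGeometry.angle u' v' :=
    InnerProductGeometry.angle_comm v' u'
  calc Real.sin (∠ B A D) * Real.sin (∠ C' A' D') * (‖u‖ * ‖D -ᵥ A‖ * (‖v‖ * ‖D' -ᵥ A'‖))
      = (Real.sin (∠ B A D) * (‖u‖ * ‖D -ᵥ A‖)) *
        (Real.sin (∠ C' A' D') * (‖v'‖ * ‖D' -ᵥ A'‖)) := by rw [hnv]; ring
    _ = (t * (Real.sin (InnerProductGeometry.angle u v) * (‖u‖ * ‖v‖))) *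
        ((1 - t) * (Real.sin (InnerProductGeometry.angle u' v') * (‖v'‖ * ‖u'‖))) := by
        rw [h1, h2', hcomm']
    _ = ((1 - t) * (Real.sin (InnerProductGeometry.angle u v) * (‖v‖ * ‖u‖))) *
        (t * (Real.sin (InnerProductGeometry.angle u' v') * (‖u'‖ * ‖v'‖))) := by ring
    _ = (Real.sin (∠ C A D) * (‖v‖ * ‖D -ᵥ A‖)) *
        (Real.sin (∠ B' A' D') * (‖u'‖ * ‖D' -ᵥ A'‖)) := by rw [h2, h1', hcomm]
    _ = Real.sin (∠ C A D) * Real.sin (∠ B' A' D') * (‖u‖ * ‖D -ᵥ A‖ * (‖v‖ * ‖D' -ᵥ A'‖)) := by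
        rw [hnu]; ring
end

section
/- Let ABC be a nondegenerate triangle in the Euclidean plane. Define sequences of points (Bᵢ) and (Cᵢ) by B₀ = B, C₀ = C, and for each i, Bᵢ₊₁ is the point on the segment [A, Bᵢ] and Cᵢ₊₁ the point on the segment [A, Cᵢ] with dist(A, Bᵢ₊₁) = dist(A, Cᵢ₊₁) = (dist(A,Bᵢ) + dist(A,Cᵢ) − dist(Bᵢ,Cᵢ))/2 (the tangent length of the triangle A Bᵢ Cᵢ from the vertex A). Then: (i) for every i the points A, Bᵢ, Cᵢ are affinely independent; (ii) for every n, the partial sum ∑_{i=1}^{n} dist(Bᵢ, Cᵢ) ≤ dist(A,B) + dist(A,C), hence dist(Bᵢ, Cᵢ) → 0; and (iii) Bᵢ → A and Cᵢ → A as i → ∞. -/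
open EuclideanGeometry Real Filter

private lemma aff_iff_li {V : Type*} [AddCommGroup V] [Module ℝ V]
    (A P Q : V) :
    AffineIndependent ℝ ![A, P, Q] ↔ LinearIndependent ℝ ![P - A, Q - A] := by
  rw [affineIndependent_iff_linearIndependent_vsub ℝ _ 0]
  let e : Fin 2 ≃ {x : Fin 3 // x ≠ 0} :=
    { toFun := fun i => if i = 0 then ⟨1, by decide⟩ else ⟨2, by decide⟩
      invFun := fun x => if (x : Fin 3) = 1 then 0 else 1
      left_inv := by decide
      right_inv := by decide }
  rw [← linearIndependent_equiv e]
  have h : ((fun x : {x : Fin 3 // x ≠ 0} => ![A, P, Q] ↑x -ᵥ ![A, P, Q] 0) ∘ e)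
      = ![P - A, Q - A] := by
    ext i; fin_cases i <;> simp [e, vsub_eq_sub]
  rw [h]

private lemma li_smul {V : Type*} [AddCommGroup V] [Module ℝ V] {u v : V}
    (h : LinearIndependent ℝ ![u, v]) {l m : ℝ} (hl : l ≠ 0) (hm : m ≠ 0) :
    LinearIndependent ℝ ![l • u, m • v] := by
  rw [LinearIndependent.pair_iff] at h ⊢
  intro s t hst
  have h2 := h (s * l) (t * m) (by rw [mul_smul, mul_smul]; exact hst)
  exact ⟨by rcases mul_eq_zero.mp h2.1 with h | h; exact h; exact absurd h hl,
         by rcases mul_eq_zero.mp h2.2 with h | h; exact h; exact absurd h hm⟩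

private lemma strict_tri {A P Q : EuclideanSpace ℝ (Fin 2)}
    (h : AffineIndependent ℝ ![A, P, Q]) :
    dist P Q < dist A P + dist A Q := by
  rcases lt_or_eq_of_le (dist_triangle P A Q) with h' | h'
  · rwa [dist_comm P A] at h'
  · exfalso
    have hw : Wbtw ℝ P A Q := dist_add_dist_eq_iff.mp h'.symm
    have hc := hw.collinear
    rw [Set.insert_comm] at hc
    exact (affineIndependent_iff_not_collinear_set.mp h) hc

/-- The iterated tangent-point construction from the proof of Lemma 5
(small-1) of Belenkiy–Burago: starting from a nondegenerate triangle `ABC`,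
define `B₀ = B`, `C₀ = C`, and let `Bᵢ₊₁ ∈ [A, Bᵢ]` and `Cᵢ₊₁ ∈ [A, Cᵢ]` be the
points at distance `(dist A Bᵢ + dist A Cᵢ − dist Bᵢ Cᵢ)/2` from `A`.  Then all
triangles `A Bᵢ Cᵢ` are nondegenerate, `∑_{i=1}^{n} dist(Bᵢ,Cᵢ) ≤
dist A B + dist A C` for all `n` (hence `dist(Bᵢ,Cᵢ) → 0`), and `Bᵢ → A`,
`Cᵢ → A`. -/
theorem stmt7
    (A B C : EuclideanSpace ℝ (Fin 2))
    (hABC : AffineIndependent ℝ ![A, B, C])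
    (β γ : ℕ → EuclideanSpace ℝ (Fin 2))
    (hβ0 : β 0 = B) (hγ0 : γ 0 = C)
    (hβseg : ∀ i, β (i + 1) ∈ segment ℝ A (β i))
    (hγseg : ∀ i, γ (i + 1) ∈ segment ℝ A (γ i))
    (hβdist : ∀ i, dist A (β (i + 1)) =
      (dist A (β i) + dist A (γ i) - dist (β i) (γ i)) / 2)
    (hγdist : ∀ i, dist A (γ (i + 1)) =
      (dist A (β i) + dist A (γ i) - dist (β i) (γ i)) / 2) :
    (∀ i, AffineIndependent ℝ ![A, β i, γ i]) ∧
    (∀ n : ℕ, ∑ i ∈ Finset.Icc 1 n, dist (β i) (γ i) ≤ dist A B + dist A C) ∧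
    Tendsto (fun i => dist (β i) (γ i)) atTop (nhds 0) ∧
    Tendsto β atTop (nhds A) ∧ Tendsto γ atTop (nhds A) := by
  classical
  set u := B - A with hu
  set v := C - A with hv
  have huv : LinearIndependent ℝ ![u, v] := (aff_iff_li A B C).mp hABC
  -- a single segment step
  have seg_step : ∀ (w : EuclideanSpace ℝ (Fin 2)) (x y : EuclideanSpace ℝ (Fin 2)) (l : ℝ),
      x - A = l • w → y ∈ segment ℝ A x → ∃ b : ℝ, 0 ≤ b ∧ y - A = (b * l) • w := by
    intro w x y l hx hy
    obtain ⟨a, b, _, hb, hab, hba⟩ := hy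
    refine ⟨b, hb, ?_⟩
    have : y - A = b • (x - A) := by
      rw [← hba]
      have ha1 : a = 1 - b := by linarith
      rw [ha1]; module
    rw [this, hx, smul_smul]
  -- the key representation lemma, by induction
  have key : ∀ i, ∃ l m : ℝ, 0 < l ∧ 0 < m ∧ β i - A = l • u ∧ γ i - A = m • v := by
    intro i
    induction i with
    | zero => exact ⟨1, 1, one_pos, one_pos, by simp [hβ0, hu], by simp [hγ0, hv]⟩
    | succ i ih =>
      obtain ⟨l, m, hl, hm, hbl, hgm⟩ := ih
      have haff : AffineIndependent ℝ ![A, β i, γ i] := by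
        rw [aff_iff_li, hbl, hgm]; exact li_smul huv hl.ne' hm.ne'
      have ht : 0 < (dist A (β i) + dist A (γ i) - dist (β i) (γ i)) / 2 := by
        have := strict_tri haff; linarith
      obtain ⟨b, hb, hb1⟩ := seg_step u (β i) (β (i+1)) l hbl (hβseg i)
      obtain ⟨c, hc, hc1⟩ := seg_step v (γ i) (γ (i+1)) m hgm (hγseg i)
      have hβd : dist A (β (i+1)) = ‖(b * l) • u‖ := by
        rw [dist_comm, dist_eq_norm, hb1]
      have hγd : dist A (γ (i+1)) = ‖(c * m) • v‖ := by
        rw [dist_comm, dist_eq_norm, hc1]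
      have hbl0 : b * l ≠ 0 := by
        intro h0
        rw [hβdist i] at hβd
        rw [h0, zero_smul, norm_zero] at hβd
        exact absurd hβd ht.ne'
      have hcm0 : c * m ≠ 0 := by
        intro h0
        rw [hγdist i] at hγd
        rw [h0, zero_smul, norm_zero] at hγd
        exact absurd hγd ht.ne'
      exact ⟨b * l, c * m,
        lt_of_le_of_ne (mul_nonneg hb hl.le) (Ne.symm hbl0),
        lt_of_le_of_ne (mul_nonneg hc hm.le) (Ne.symm hcm0), hb1, hc1⟩
  have haff : ∀ i, AffineIndependent ℝ ![A, β i, γ i] := by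
    intro i
    obtain ⟨l, m, hl, hm, hbl, hgm⟩ := key i
    rw [aff_iff_li, hbl, hgm]; exact li_smul huv hl.ne' hm.ne'
  -- the quantity s
  set s : ℕ → ℝ := fun i => dist A (β i) + dist A (γ i) with hs_def
  have hs : ∀ i, s (i + 1) = s i - dist (β i) (γ i) := by
    intro i
    simp only [hs_def, hβdist i, hγdist i]
    ring
  have hs0 : ∀ i, 0 ≤ s i := fun i => add_nonneg dist_nonneg dist_nonneg
  have hd : ∀ i, dist (β i) (γ i) = s i - s (i + 1) := by
    intro i; rw [hs i]; ring
  have hs01 : s 1 ≤ s 0 := by rw [hs 0]; have := dist_nonneg (x := β 0) (y := γ 0); linarith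
  -- partial sums
  have hsum : ∀ n : ℕ, ∑ i ∈ Finset.Icc 1 n, dist (β i) (γ i) ≤ dist A B + dist A C := by
    intro n
    have h0 : dist A B + dist A C = s 0 := by simp only [hs_def, hβ0, hγ0]
    have htel : ∀ k : ℕ, ∑ i ∈ Finset.Icc 1 k, dist (β i) (γ i) = s 1 - s (k + 1) := by
      intro k
      induction k with
      | zero => simp
      | succ k ihk =>
        rw [Finset.sum_Icc_succ_top (Nat.succ_le_succ (Nat.zero_le k)), ihk, hd (k + 1)]
        ring
    rw [h0, htel n]
    have := hs0 (n + 1)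
    linarith
  -- convergence of s and of the distances
  have hanti : Antitone s := antitone_nat_of_succ_le (fun i => by
    rw [hs i]
    have : (0:ℝ) ≤ dist (β i) (γ i) := dist_nonneg
    linarith)
  have hbdd : BddBelow (Set.range s) := ⟨0, by rintro x ⟨i, rfl⟩; exact hs0 i⟩
  have hL : Tendsto s atTop (nhds (⨅ i, s i)) := tendsto_atTop_ciInf hanti hbdd
  have hL' : Tendsto (fun i => s (i + 1)) atTop (nhds (⨅ i, s i)) :=
    hL.comp (tendsto_add_atTop_nat 1)
  have hdt : Tendsto (fun i => dist (β i) (γ i)) atTop (nhds 0) := by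
    have h2 := hL.sub hL'
    rw [sub_self] at h2
    exact h2.congr (fun i => (hd i).symm)
  have hd0' : Tendsto (fun i => β i - γ i) atTop (nhds 0) := by
    rw [tendsto_zero_iff_norm_tendsto_zero]
    exact hdt.congr (fun i => dist_eq_norm (β i) (γ i))
  -- basis coordinates
  have hcard : Fintype.card (Fin 2) = Module.finrank ℝ (EuclideanSpace ℝ (Fin 2)) := by simp
  let bas := basisOfLinearIndependentOfCardEqFinrank huv hcard
  have hbas : ⇑bas = ![u, v] := coe_basisOfLinearIndependentOfCardEqFinrank _ _
  have h0u : bas.coord 0 u = 1 := by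
    have h : u = bas 0 := by rw [hbas]; rfl
    rw [h, Module.Basis.coord_apply, Module.Basis.repr_self, Finsupp.single_eq_same]
  have h0v : bas.coord 0 v = 0 := by
    have h : v = bas 1 := by rw [hbas]; rfl
    rw [h, Module.Basis.coord_apply, Module.Basis.repr_self]
    exact Finsupp.single_eq_of_ne (by decide)
  have h1u : bas.coord 1 u = 0 := by
    have h : u = bas 0 := by rw [hbas]; rfl
    rw [h, Module.Basis.coord_apply, Module.Basis.repr_self]
    exact Finsupp.single_eq_of_ne (by decide)
  have h1v : bas.coord 1 v = 1 := by
    have h : v = bas 1 := by rw [hbas]; rfl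
    rw [h, Module.Basis.coord_apply, Module.Basis.repr_self, Finsupp.single_eq_same]
  have hβrep : ∀ i, β i = A + (bas.coord 0 (β i - γ i)) • u := by
    intro i
    obtain ⟨l, m, hl, hm, hbl, hgm⟩ := key i
    have hbg : β i - γ i = l • u - m • v := by rw [← hbl, ← hgm]; abel
    have hc : bas.coord 0 (β i - γ i) = l := by
      rw [hbg, map_sub, map_smul, map_smul, h0u, h0v]; simp
    rw [hc, ← hbl]; abel
  have hγrep : ∀ i, γ i = A - (bas.coord 1 (β i - γ i)) • v := by
    intro i
    obtain ⟨l, m, hl, hm, hbl, hgm⟩ := key i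
    have hbg : β i - γ i = l • u - m • v := by rw [← hbl, ← hgm]; abel
    have hc : bas.coord 1 (β i - γ i) = -m := by
      rw [hbg, map_sub, map_smul, map_smul, h1u, h1v]; simp
    rw [hc, neg_smul, sub_neg_eq_add, ← hgm]
    abel
  have hcont0 : Continuous (bas.coord 0) := (bas.coord 0).continuous_of_finiteDimensional
  have hcont1 : Continuous (bas.coord 1) := (bas.coord 1).continuous_of_finiteDimensional
  refine ⟨haff, hsum, hdt, ?_, ?_⟩
  · have h2 : Tendsto (fun i => A + (bas.coord 0 (β i - γ i)) • u) atTop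
        (nhds (A + (bas.coord 0 (0 : EuclideanSpace ℝ (Fin 2))) • u)) :=
      (((hcont0.tendsto 0).comp hd0').smul_const u).const_add A
    simp only [map_zero, zero_smul, add_zero] at h2
    exact h2.congr (fun i => (hβrep i).symm)
  · have h2 : Tendsto (fun i => A - (bas.coord 1 (β i - γ i)) • v) atTop
        (nhds (A - (bas.coord 1 (0 : EuclideanSpace ℝ (Fin 2))) • v)) :=
      Tendsto.const_sub A (((hcont1.tendsto 0).comp hd0').smul_const v)
    simp only [map_zero, zero_smul, sub_zero] at h2
    exact h2.congr (fun i => (hγrep i).symm)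
end
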